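/- arXiv:2301.05011 — 6 statements merged into one kernel-verified Lean document; each statement's English description precedes it below -/
import Mathlib

section
/- Classical bathtub principle (uniqueness): Let v ∈ L²(Ω) be such that every level set of v is Lebesgue-null, i.e. |{x ∈ Ω : v(x) = λ}| = 0 for all λ ∈ ℝ. Then the maximisation of u ↦ ∫_Ω u·v over Ũ*_L has the unique maximiser u* = χ_{{v > ρ(v)}} (up to a.e. equality), and the maximum value equals ∫_{{v > ρ(v)}} v. -/
open MeasureTheory
open scoped ENNReal

private lemma bathtub_mul_integrable {α : Type*} [MeasurableSpace α] {μ : Measure α}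
    {f g : α → ℝ} (hf : MemLp f 2 μ) (hg : MemLp g 2 μ) :
    Integrable (fun x => f x * g x) μ := by
  have h : MemLp (f • g) 1 μ := hg.smul hf
  exact memLp_one_iff_integrable.mp h

/-- Classical bathtub principle (uniqueness): if all level sets of `v` are
Lebesgue-null, then `χ_{v>ρ(v)}` is the unique (up to a.e. equality) maximiser of
`u ↦ ∫ u v` over `Ũ*_L`, and the maximum value equals `∫_{v>ρ(v)} v`. -/
theorem classical_bathtub_uniqueness
    (d : ℕ) (hd : 1 ≤ d)
    (Ω : Set (Fin d → ℝ)) (hΩne : Ω.Nonempty) (hΩop : IsOpen Ω)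
    (hΩbd : Bornology.IsBounded Ω)
    (L : ℝ) (hL : L ∈ Set.Ioo (0 : ℝ) 1)
    (μ : Measure (Fin d → ℝ)) (hμ : μ = volume.restrict Ω)
    (v : (Fin d → ℝ) → ℝ) (hv : MemLp v 2 μ)
    (hlevel : ∀ l : ℝ, μ {x | v x = l} = 0)
    (Φ : ℝ → ℝ) (hΦ : ∀ r : ℝ, Φ r = (μ {x | v x > r}).toReal)
    (Φinv : ℝ → ℝ) (hΦinv : ∀ s : ℝ, Φinv s = sInf {r : ℝ | Φ r ≤ s})
    (A : ℝ) (hA : A = L * (volume Ω).toReal)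
    (ρ : ℝ) (hρ : ρ = Φinv A)
    (ustar : (Fin d → ℝ) → ℝ)
    (hustar : ustar = Set.indicator {y | v y > ρ} (fun _ => (1:ℝ))) :
    (MemLp ustar 2 μ ∧ (∀ᵐ x ∂μ, 0 ≤ ustar x ∧ ustar x ≤ 1) ∧
      (∫ x, ustar x ∂μ) = A) ∧
    (∀ u : (Fin d → ℝ) → ℝ, MemLp u 2 μ →
      (∀ᵐ x ∂μ, 0 ≤ u x ∧ u x ≤ 1) → (∫ x, u x ∂μ) = A →
      (∫ x, u x * v x ∂μ) ≤ ∫ x, ustar x * v x ∂μ) ∧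
    (∀ u : (Fin d → ℝ) → ℝ, MemLp u 2 μ →
      (∀ᵐ x ∂μ, 0 ≤ u x ∧ u x ≤ 1) → (∫ x, u x ∂μ) = A →
      (∫ x, u x * v x ∂μ) = (∫ x, ustar x * v x ∂μ) →
      u =ᵐ[μ] ustar) ∧
    (∫ x, ustar x * v x ∂μ) = ∫ x in {y | v y > ρ}, v x ∂μ := by
  obtain ⟨hL0, hL1⟩ := hL
  have hμuniv : μ Set.univ = volume Ω := by
    rw [hμ, Measure.restrict_apply_univ]
  have hΩlt : volume Ω < ⊤ := hΩbd.measure_lt_top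
  haveI : IsFiniteMeasure μ := ⟨by rw [hμuniv]; exact hΩlt⟩
  have hΩfin : volume Ω ≠ ⊤ := hΩlt.ne
  have hΩpos : 0 < volume Ω := hΩop.measure_pos volume hΩne
  have ht : 0 < (volume Ω).toReal := ENNReal.toReal_pos hΩpos.ne' hΩfin
  have hA0 : 0 < A := by rw [hA]; exact mul_pos hL0 ht
  have hAlt : ENNReal.ofReal A < volume Ω := by
    have h1 : ENNReal.ofReal A < ENNReal.ofReal ((volume Ω).toReal) :=
      (ENNReal.ofReal_lt_ofReal_iff ht).2 (by rw [hA]; nlinarith)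
    rwa [ENNReal.ofReal_toReal hΩfin] at h1
  have hvm : AEMeasurable v μ := hv.aestronglyMeasurable.aemeasurable
  have hnm : ∀ r : ℝ, NullMeasurableSet {x | v x > r} μ := fun r =>
    nullMeasurableSet_lt aemeasurable_const hvm
  have hle_iff : ∀ r : ℝ, Φ r ≤ A ↔ μ {x | v x > r} ≤ ENNReal.ofReal A := fun r => by
    rw [hΦ r]
    exact (ENNReal.le_ofReal_iff_toReal_le (measure_ne_top μ _) hA0.le).symm
  -- nonemptiness of {r | Φ r ≤ A}
  have hcap : (⋂ n : ℕ, {x | v x > (n:ℝ)}) = ∅ := by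
    ext x
    simp only [Set.mem_iInter, Set.mem_setOf_eq, Set.mem_empty_iff_false, iff_false,
      not_forall, not_lt]
    obtain ⟨n, hn⟩ := exists_nat_gt (v x)
    exact ⟨n, hn.le⟩
  have hanti3 : Antitone (fun n : ℕ => {x | v x > (n:ℝ)}) := by
    intro m n hmn x hx
    simp only [Set.mem_setOf_eq] at hx ⊢
    exact lt_of_le_of_lt (Nat.cast_le.2 hmn) hx
  have hne : Set.Nonempty {r : ℝ | Φ r ≤ A} := by
    have h0 : (⨅ n : ℕ, μ {x | v x > (n:ℝ)}) < ENNReal.ofReal A := by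
      rw [← hanti3.measure_iInter (fun n => hnm _) ⟨0, measure_ne_top μ _⟩, hcap,
        measure_empty]
      exact ENNReal.ofReal_pos.2 hA0
    obtain ⟨n, hn⟩ := iInf_lt_iff.1 h0
    exact ⟨n, (hle_iff _).2 hn.le⟩
  -- boundedness below
  have hcup : (⋃ n : ℕ, {x | v x > -(n:ℝ)}) = Set.univ := by
    ext x
    simp only [Set.mem_iUnion, Set.mem_setOf_eq, Set.mem_univ, iff_true]
    obtain ⟨n, hn⟩ := exists_nat_gt (-(v x))
    exact ⟨n, by linarith⟩
  have hmono2 : Monotone (fun n : ℕ => {x | v x > -(n:ℝ)}) := by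
    intro m n hmn x hx
    simp only [Set.mem_setOf_eq] at hx ⊢
    exact lt_of_le_of_lt (neg_le_neg (Nat.cast_le.2 hmn)) hx
  have hbdd : BddBelow {r : ℝ | Φ r ≤ A} := by
    have h1 : ENNReal.ofReal A < ⨆ n : ℕ, μ {x | v x > -(n:ℝ)} := by
      rw [← hmono2.measure_iUnion, hcup, hμuniv]
      exact hAlt
    obtain ⟨n, hn⟩ := lt_iSup_iff.1 h1
    refine ⟨-(n:ℝ), fun r hr => ?_⟩
    by_contra h
    push_neg at h
    have h2 : μ {x | v x > -(n:ℝ)} ≤ ENNReal.ofReal A :=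
      le_trans (measure_mono fun x hx => lt_trans h hx) ((hle_iff r).1 hr)
    exact absurd h2 (not_le.2 hn)
  have hρ_le : ∀ {r : ℝ}, Φ r ≤ A → ρ ≤ r := fun {r} hr => by
    rw [hρ, hΦinv]; exact csInf_le hbdd hr
  have hlt_of : ∀ {r : ℝ}, r < ρ → ENNReal.ofReal A < μ {x | v x > r} := by
    intro r hr
    by_contra h
    push_neg at h
    exact absurd (hρ_le ((hle_iff r).2 h)) (not_le.2 hr)
  have hgt_of : ∀ {r : ℝ}, ρ < r → μ {x | v x > r} ≤ ENNReal.ofReal A := by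
    intro r hr
    have h1 : sInf {r : ℝ | Φ r ≤ A} < r := by rw [hρ, hΦinv] at hr; exact hr
    obtain ⟨s, hs, hsr⟩ := (csInf_lt_iff hbdd hne).1 h1
    exact le_trans (measure_mono fun x hx => lt_trans hsr hx) ((hle_iff s).1 hs)
  -- μ {v > ρ} = ofReal A
  have hU1 : {x | v x > ρ} = ⋃ n : ℕ, {x | v x > ρ + 1/((n:ℝ)+1)} := by
    ext x
    simp only [Set.mem_setOf_eq, Set.mem_iUnion]
    constructor
    · intro h
      obtain ⟨n, hn⟩ := exists_nat_one_div_lt (sub_pos.2 h)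
      exact ⟨n, by linarith⟩
    · rintro ⟨n, hn⟩
      have h0 : 0 < 1/((n:ℝ)+1) := by positivity
      linarith
  have hmono1 : Monotone (fun n : ℕ => {x | v x > ρ + 1/((n:ℝ)+1)}) := by
    intro m n hmn x hx
    simp only [Set.mem_setOf_eq] at hx ⊢
    have h1 : 1/((n:ℝ)+1) ≤ 1/((m:ℝ)+1) := by
      apply one_div_le_one_div_of_le (by positivity)
      have := (Nat.cast_le (α := ℝ)).2 hmn
      linarith
    exact lt_of_le_of_lt (by linarith) hx
  have hμS_le : μ {x | v x > ρ} ≤ ENNReal.ofReal A := by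
    rw [hU1, hmono1.measure_iUnion]
    exact iSup_le fun n => hgt_of (lt_add_of_pos_right ρ (by positivity))
  have hI : {x | ρ ≤ v x} = ⋂ n : ℕ, {x | v x > ρ - 1/((n:ℝ)+1)} := by
    ext x
    simp only [Set.mem_setOf_eq, Set.mem_iInter]
    constructor
    · intro h n
      have h0 : 0 < 1/((n:ℝ)+1) := by positivity
      linarith
    · intro h
      by_contra hc
      push_neg at hc
      obtain ⟨n, hn⟩ := exists_nat_one_div_lt (sub_pos.2 hc)
      have := h n
      linarith
  have hanti2 : Antitone (fun n : ℕ => {x | v x > ρ - 1/((n:ℝ)+1)}) := by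
    intro m n hmn x hx
    simp only [Set.mem_setOf_eq] at hx ⊢
    have h1 : 1/((n:ℝ)+1) ≤ 1/((m:ℝ)+1) := by
      apply one_div_le_one_div_of_le (by positivity)
      have := (Nat.cast_le (α := ℝ)).2 hmn
      linarith
    exact lt_of_le_of_lt (by linarith) hx
  have hμS_ge : ENNReal.ofReal A ≤ μ {x | v x > ρ} := by
    have h1 : ENNReal.ofReal A ≤ μ {x | ρ ≤ v x} := by
      rw [hI, hanti2.measure_iInter (fun n => hnm _) ⟨0, measure_ne_top μ _⟩]
      refine le_iInf fun n => (hlt_of ?_).le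
      have h0 : 0 < 1/((n:ℝ)+1) := by positivity
      linarith
    calc ENNReal.ofReal A ≤ μ {x | ρ ≤ v x} := h1
      _ ≤ μ ({x | v x > ρ} ∪ {x | v x = ρ}) := by
        refine measure_mono fun x hx => ?_
        simp only [Set.mem_setOf_eq] at hx
        simp only [Set.mem_union, Set.mem_setOf_eq]
        rcases lt_or_eq_of_le hx with h | h
        · exact Or.inl h
        · exact Or.inr h.symm
      _ ≤ μ {x | v x > ρ} + μ {x | v x = ρ} := measure_union_le _ _
      _ = μ {x | v x > ρ} := by rw [hlevel ρ, add_zero]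
  have hμS : μ {x | v x > ρ} = ENNReal.ofReal A := le_antisymm hμS_le hμS_ge
  -- measurable version of the set
  set S : Set (Fin d → ℝ) := {y | v y > ρ} with hS
  set S' : Set (Fin d → ℝ) := MeasureTheory.toMeasurable μ S with hS'
  have hS'meas : MeasurableSet S' := measurableSet_toMeasurable μ S
  have hS'ae : S' =ᵐ[μ] S := (hnm ρ).toMeasurable_ae_eq
  have hindae : Set.indicator S' (fun _ => (1:ℝ)) =ᵐ[μ] ustar := by
    rw [hustar]
    exact indicator_ae_eq_of_ae_eq_set hS'ae
  have hust_sm : AEStronglyMeasurable ustar μ :=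
    ((measurable_const.indicator hS'meas).aestronglyMeasurable).congr hindae
  have hust_bd : ∀ x, 0 ≤ ustar x ∧ ustar x ≤ 1 := by
    intro x
    rw [hustar]
    by_cases hx : x ∈ S
    · rw [Set.indicator_of_mem hx]; exact ⟨zero_le_one, le_refl 1⟩
    · rw [Set.indicator_of_notMem hx]; exact ⟨le_refl 0, zero_le_one⟩
  have hust2 : MemLp ustar 2 μ := by
    refine MemLp.of_bound hust_sm 1 (Filter.Eventually.of_forall fun x => ?_)
    rw [Real.norm_eq_abs, abs_le]
    exact ⟨by linarith [(hust_bd x).1], (hust_bd x).2⟩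
  have hustint : (∫ x, ustar x ∂μ) = A := by
    rw [← integral_congr_ae hindae, integral_indicator_const (1:ℝ) hS'meas,
      Measure.real, measure_congr hS'ae, hμS, smul_eq_mul, mul_one, ENNReal.toReal_ofReal hA0.le]
  -- a.e. v ≠ ρ
  have hae_ne : ∀ᵐ x ∂μ, v x ≠ ρ := by
    refine ae_iff.2 ?_
    simpa using hlevel ρ
  -- key computation for admissible u
  have hkey : ∀ u : (Fin d → ℝ) → ℝ, MemLp u 2 μ →
      (∀ᵐ x ∂μ, 0 ≤ u x ∧ u x ≤ 1) → (∫ x, u x ∂μ) = A →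
      ((∫ x, u x * v x ∂μ) - (∫ x, ustar x * v x ∂μ)
        = ∫ x, (u x - ustar x) * (v x - ρ) ∂μ)
      ∧ Integrable (fun x => (u x - ustar x) * (v x - ρ)) μ
      ∧ (∀ᵐ x ∂μ, (u x - ustar x) * (v x - ρ) ≤ 0) := by
    intro u hu2 hu01 huA
    have hdiff : MemLp (fun x => u x - ustar x) 2 μ := hu2.sub hust2
    have hvρ : MemLp (fun x => v x - ρ) 2 μ := hv.sub (memLp_const ρ)
    have hint_g : Integrable (fun x => (u x - ustar x) * (v x - ρ)) μ :=
      bathtub_mul_integrable hdiff hvρ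
    have hint_uv : Integrable (fun x => u x * v x) μ := bathtub_mul_integrable hu2 hv
    have hint_usv : Integrable (fun x => ustar x * v x) μ := bathtub_mul_integrable hust2 hv
    have hint_u : Integrable u μ := hu2.integrable one_le_two
    have hint_us : Integrable ustar μ := hust2.integrable one_le_two
    constructor
    · have hfun : (fun x => (u x - ustar x) * (v x - ρ))
          = fun x => (u x * v x - ustar x * v x) - (ρ * u x - ρ * ustar x) := by
        funext x; ring
      have hint1 : Integrable (fun x => u x * v x - ustar x * v x) μ :=
        hint_uv.sub hint_usv
      have hint2 : Integrable (fun x => ρ * u x - ρ * ustar x) μ :=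
        (hint_u.const_mul ρ).sub (hint_us.const_mul ρ)
      have hint3 : Integrable (fun x => ρ * u x) μ := hint_u.const_mul ρ
      have hint4 : Integrable (fun x => ρ * ustar x) μ := hint_us.const_mul ρ
      rw [hfun, integral_sub hint1 hint2, integral_sub hint_uv hint_usv,
        integral_sub hint3 hint4,
        integral_const_mul, integral_const_mul, huA, hustint, sub_self, sub_zero]
    refine ⟨hint_g, ?_⟩
    filter_upwards [hu01, hae_ne] with x hx hne2
    obtain ⟨h0, h1⟩ := hx
    rcases lt_or_gt_of_ne hne2 with hlt | hgt
    · have hus0 : ustar x = 0 := by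
        rw [hustar]
        exact Set.indicator_of_notMem (show x ∉ S from not_lt.2 hlt.le) _
      rw [hus0]
      nlinarith [mul_nonneg h0 (sub_nonneg.2 hlt.le)]
    · have hus1 : ustar x = 1 := by
        rw [hustar]
        exact Set.indicator_of_mem (show x ∈ S from hgt) _
      rw [hus1]
      nlinarith [mul_nonneg (sub_nonneg.2 h1) (sub_nonneg.2 hgt.le)]
  refine ⟨⟨hust2, Filter.Eventually.of_forall hust_bd, hustint⟩, ?_, ?_, ?_⟩
  · intro u hu2 hu01 huA
    obtain ⟨heq, hint, hle⟩ := hkey u hu2 hu01 huA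
    have h0 : (∫ x, (u x - ustar x) * (v x - ρ) ∂μ) ≤ 0 := integral_nonpos_of_ae hle
    linarith [heq]
  · intro u hu2 hu01 huA hval
    obtain ⟨heq, hint, hle⟩ := hkey u hu2 hu01 huA
    have h0 : (∫ x, (u x - ustar x) * (v x - ρ) ∂μ) = 0 := by
      rw [← heq, hval, sub_self]
    have hnneg : 0 ≤ᵐ[μ] fun x => -((u x - ustar x) * (v x - ρ)) :=
      hle.mono fun x hx => by simpa using hx
    have hzero : (fun x => -((u x - ustar x) * (v x - ρ))) =ᵐ[μ] 0 := by
      refine (integral_eq_zero_iff_of_nonneg_ae hnneg hint.neg).1 ?_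
      rw [integral_neg, h0, neg_zero]
    filter_upwards [hzero, hae_ne] with x hx hne2
    have hx0 : (u x - ustar x) * (v x - ρ) = 0 := by
      have := hx
      simp only [Pi.zero_apply, neg_eq_zero] at this
      exact this
    rcases mul_eq_zero.1 hx0 with h | h
    · linarith [sub_eq_zero.1 h]
    · exact absurd (by linarith [sub_eq_zero.1 h] : v x = ρ) hne2
  · have hfun : (fun x => ustar x * v x) = Set.indicator S v := by
      funext x
      rw [hustar]
      by_cases hx : x ∈ S
      · rw [Set.indicator_of_mem hx, Set.indicator_of_mem hx, one_mul]
      · rw [Set.indicator_of_notMem hx, Set.indicator_of_notMem hx, zero_mul]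
    calc (∫ x, ustar x * v x ∂μ) = ∫ x, Set.indicator S v x ∂μ := by rw [hfun]
      _ = ∫ x, Set.indicator S' v x ∂μ :=
        (integral_congr_ae (indicator_ae_eq_of_ae_eq_set hS'ae)).symm
      _ = ∫ x in S', v x ∂μ := integral_indicator hS'meas
      _ = ∫ x in S, v x ∂μ := by rw [Measure.restrict_congr_set hS'ae]
end

section
/- Relaxed bathtub principle (maximisers): For every v ∈ L²(Ω), a function u* ∈ Ū_L maximises u ↦ ∫_Ω u·v over Ū_L if and only if u* = χ_{{v > h(v)}} + c·χ_{{v = h(v)}} almost everywhere, for some measurable c : Ω → ℝ with 0 ≤ c ≤ 1 satisfying: ∫_{{v = h(v)}} c = L|Ω| − |{v > h(v)}| in the case h(v) > 0, and ∫_{{v = h(v)}} c ≤ L|Ω| − |{v > h(v)}| in the case h(v) = 0. -/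
open MeasureTheory
open scoped ENNReal
set_option maxHeartbeats 1000000

lemma bathtub_core {X : Type*} [MeasurableSpace X] (μ : Measure X) [IsFiniteMeasure μ]
    (v : X → ℝ) (hvm : Measurable v) (hvint : Integrable v μ)
    (h A : ℝ) (hh : 0 ≤ h)
    (ustar u : X → ℝ)
    (hustar_m : AEStronglyMeasurable ustar μ)
    (hustar01 : ∀ᵐ x ∂μ, 0 ≤ ustar x ∧ ustar x ≤ 1)
    (hu_m : AEStronglyMeasurable u μ)
    (hu01 : ∀ᵐ x ∂μ, 0 ≤ u x ∧ u x ≤ 1)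
    (huA : (∫ x, u x ∂μ) ≤ A)
    (c : X → ℝ) (hcm : Measurable c) (hc01 : ∀ x, 0 ≤ c x ∧ c x ≤ 1)
    (hdecomp : ∀ᵐ x ∂μ, ustar x = Set.indicator {y | v y > h} (fun _ => (1:ℝ)) x
      + c x * Set.indicator {y | v y = h} (fun _ => (1:ℝ)) x)
    (hsum : 0 < h → (μ {y | v y > h}).toReal + (∫ x in {y | v y = h}, c x ∂μ) = A) :
    (∫ x, u x * v x ∂μ) ≤ ∫ x, ustar x * v x ∂μ := by
  have hu_int : Integrable u μ := by
    refine Integrable.mono' (integrable_const 1) hu_m ?_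
    filter_upwards [hu01] with x ⟨h0, h1⟩
    rw [Real.norm_eq_abs, abs_le]; constructor <;> linarith
  have hustar_int : Integrable ustar μ := by
    refine Integrable.mono' (integrable_const 1) hustar_m ?_
    filter_upwards [hustar01] with x ⟨h0, h1⟩
    rw [Real.norm_eq_abs, abs_le]; constructor <;> linarith
  have huv_int : Integrable (fun x => u x * v x) μ := by
    refine hvint.bdd_mul (c := 1) hu_m ?_
    filter_upwards [hu01] with x ⟨h0, h1⟩
    rw [Real.norm_eq_abs, abs_le]; constructor <;> linarith
  have husv_int : Integrable (fun x => ustar x * v x) μ := by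
    refine hvint.bdd_mul (c := 1) hustar_m ?_
    filter_upwards [hustar01] with x ⟨h0, h1⟩
    rw [Real.norm_eq_abs, abs_le]; constructor <;> linarith
  -- key nonnegativity
  have hkey : 0 ≤ ∫ x, (ustar x - u x) * (v x - h) ∂μ := by
    refine integral_nonneg_of_ae ?_
    filter_upwards [hdecomp, hu01] with x hx ⟨h0, h1⟩
    simp only [Pi.zero_apply]
    rcases lt_trichotomy (v x) h with hlt | heq | hgt
    · have hmem1 : x ∉ {y | v y > h} := by simp [Set.mem_setOf_eq]; linarith
      have hmem2 : x ∉ {y | v y = h} := by simp [Set.mem_setOf_eq]; linarith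
      rw [Set.indicator_of_notMem hmem1, Set.indicator_of_notMem hmem2] at hx
      simp at hx
      rw [hx]
      nlinarith
    · rw [heq]; simp
    · have hmem1 : x ∈ {y | v y > h} := hgt
      have hmem2 : x ∉ {y | v y = h} := by simp [Set.mem_setOf_eq]; linarith
      rw [Set.indicator_of_mem hmem1, Set.indicator_of_notMem hmem2] at hx
      simp at hx
      rw [hx]
      nlinarith
  -- expand the integral
  have i1 : Integrable (fun a => ustar a * v a - u a * v a) μ := husv_int.sub huv_int
  have i3 : Integrable (fun a => h * ustar a) μ := hustar_int.const_mul h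
  have i4 : Integrable (fun a => h * u a) μ := hu_int.const_mul h
  have i2 : Integrable (fun a => h * ustar a - h * u a) μ := i3.sub i4
  have hexp : ∫ x, (ustar x - u x) * (v x - h) ∂μ
      = (∫ x, ustar x * v x ∂μ) - (∫ x, u x * v x ∂μ)
        - h * ((∫ x, ustar x ∂μ) - (∫ x, u x ∂μ)) := by
    have e0 : ∀ x, (ustar x - u x) * (v x - h)
        = ustar x * v x - u x * v x - (h * ustar x - h * u x) := by intro x; ring
    rw [integral_congr_ae (Filter.Eventually.of_forall e0)]
    rw [integral_sub i1 i2, integral_sub husv_int huv_int, integral_sub i3 i4,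
      integral_const_mul, integral_const_mul]
    ring
  rcases hh.eq_or_lt with h0 | hpos
  · have hz : h * ((∫ x, ustar x ∂μ) - (∫ x, u x ∂μ)) = 0 := by rw [← h0]; ring
    linarith [hkey, hexp]
  · have hs1 : MeasurableSet {y | v y > h} := measurableSet_lt measurable_const hvm
    have hs2 : MeasurableSet {y | v y = h} := hvm (measurableSet_singleton h)
    have hint_star : (∫ x, ustar x ∂μ) = A := by
      have hrw : ∀ x, c x * Set.indicator {y | v y = h} (fun _ => (1:ℝ)) x
          = Set.indicator {y | v y = h} c x := by
        intro x
        by_cases hx : x ∈ {y | v y = h}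
        · rw [Set.indicator_of_mem hx, Set.indicator_of_mem hx]; ring
        · rw [Set.indicator_of_notMem hx, Set.indicator_of_notMem hx]; ring
      have hi1 : Integrable (Set.indicator {y | v y > h} (fun _ => (1:ℝ))) μ :=
        (integrable_const (1:ℝ)).indicator hs1
      have hi2 : Integrable (Set.indicator {y | v y = h} c) μ := by
        refine (Integrable.mono' (integrable_const 1) (hcm.aestronglyMeasurable.indicator hs2) ?_)
        refine Filter.Eventually.of_forall fun x => ?_
        rw [Real.norm_eq_abs]
        by_cases hx : x ∈ {y | v y = h}
        · rw [Set.indicator_of_mem hx]; rw [abs_le]; exact ⟨by linarith [(hc01 x).1], (hc01 x).2⟩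
        · rw [Set.indicator_of_notMem hx]; simp
      calc (∫ x, ustar x ∂μ)
          = ∫ x, (Set.indicator {y | v y > h} (fun _ => (1:ℝ)) x
              + Set.indicator {y | v y = h} c x) ∂μ := by
            refine integral_congr_ae ?_
            filter_upwards [hdecomp] with x hx
            rw [hx, hrw x]
        _ = (∫ x, Set.indicator {y | v y > h} (fun _ => (1:ℝ)) x ∂μ)
              + ∫ x, Set.indicator {y | v y = h} c x ∂μ := integral_add hi1 hi2
        _ = (μ {y | v y > h}).toReal + (∫ x in {y | v y = h}, c x ∂μ) := by
            rw [integral_indicator hs1, integral_indicator hs2, setIntegral_const]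
            simp
            rfl
        _ = A := hsum hpos
    have hnn : 0 ≤ h * ((∫ x, ustar x ∂μ) - (∫ x, u x ∂μ)) := by
      apply mul_nonneg hpos.le; rw [hint_star]; linarith
    linarith [hkey, hexp]

/-- Relaxed bathtub principle (maximisers): `ustar ∈ Ū_L` maximises `u ↦ ∫ u v`
over `Ū_L` iff `ustar = χ_{v>h(v)} + c χ_{v=h(v)}` a.e. for some measurable `c`
with `0 ≤ c ≤ 1`, where `∫_{v=h(v)} c = L|Ω| - |{v>h(v)}|` if `h(v) > 0` and
`∫_{v=h(v)} c ≤ L|Ω| - |{v>h(v)}|` if `h(v) = 0`. -/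
theorem relaxed_bathtub_maximisers
    (d : ℕ) (hd : 1 ≤ d)
    (Ω : Set (Fin d → ℝ)) (hΩne : Ω.Nonempty) (hΩop : IsOpen Ω)
    (hΩbd : Bornology.IsBounded Ω)
    (L : ℝ) (hL : L ∈ Set.Ioo (0 : ℝ) 1)
    (μ : Measure (Fin d → ℝ)) (hμ : μ = volume.restrict Ω)
    (v : (Fin d → ℝ) → ℝ) (hv : MemLp v 2 μ)
    (Φ : ℝ → ℝ) (hΦ : ∀ r : ℝ, Φ r = (μ {x | v x > r}).toReal)
    (Φinv : ℝ → ℝ) (hΦinv : ∀ s : ℝ, Φinv s = sInf {r : ℝ | Φ r ≤ s})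
    (A : ℝ) (hA : A = L * (volume Ω).toReal)
    (hvv : ℝ) (hhv : hvv = max 0 (Φinv A))
    (ustar : (Fin d → ℝ) → ℝ)
    (hustar : MemLp ustar 2 μ ∧ (∀ᵐ x ∂μ, 0 ≤ ustar x ∧ ustar x ≤ 1) ∧
      (∫ x, ustar x ∂μ) ≤ A) :
    (∀ u : (Fin d → ℝ) → ℝ, MemLp u 2 μ →
        (∀ᵐ x ∂μ, 0 ≤ u x ∧ u x ≤ 1) → (∫ x, u x ∂μ) ≤ A →
        (∫ x, u x * v x ∂μ) ≤ ∫ x, ustar x * v x ∂μ)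
    ↔
    (∃ c : (Fin d → ℝ) → ℝ, Measurable c ∧ (∀ x, 0 ≤ c x ∧ c x ≤ 1) ∧
      (0 < hvv →
        (∫ x in {y | v y = hvv}, c x ∂μ) = A - (μ {y | v y > hvv}).toReal) ∧
      (hvv = 0 →
        (∫ x in {y | v y = hvv}, c x ∂μ) ≤ A - (μ {y | v y > hvv}).toReal) ∧
      (∀ᵐ x ∂μ, ustar x =
        Set.indicator {y | v y > hvv} (fun _ => (1:ℝ)) x
          + c x * Set.indicator {y | v y = hvv} (fun _ => (1:ℝ)) x)) := by
  have hμfin : IsFiniteMeasure μ := by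
    constructor
    rw [hμ, Measure.restrict_apply_univ]
    exact hΩbd.measure_lt_top
  set w := hv.1.mk v with hw_def
  have hwm : Measurable w := hv.1.stronglyMeasurable_mk.measurable
  have hvw : v =ᵐ[μ] w := hv.1.ae_eq_mk
  have hset_gt : ∀ r : ℝ, {x | v x > r} =ᵐ[μ] {x | w x > r} := by
    intro r
    rw [Filter.eventuallyEq_set]
    filter_upwards [hvw] with x hx
    simp only [Set.mem_setOf_eq, hx]
  have hset_eq : {x | v x = hvv} =ᵐ[μ] {x | w x = hvv} := by
    rw [Filter.eventuallyEq_set]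
    filter_upwards [hvw] with x hx
    simp only [Set.mem_setOf_eq, hx]
  have hμgt : ∀ r : ℝ, μ {x | v x > r} = μ {x | w x > r} := fun r => measure_congr (hset_gt r)
  have hΦw : ∀ r : ℝ, Φ r = (μ {x | w x > r}).toReal := by
    intro r; rw [hΦ r, hμgt r]
  have hμuniv : μ Set.univ = volume Ω := by rw [hμ, Measure.restrict_apply_univ]
  have hvolpos : 0 < volume Ω := hΩop.measure_pos volume hΩne
  have hApos : 0 < A := by
    rw [hA]
    exact mul_pos hL.1 (ENNReal.toReal_pos hvolpos.ne' hΩbd.measure_lt_top.ne)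
  have hAlt : A < (μ Set.univ).toReal := by
    rw [hA, hμuniv]
    nlinarith [hL.2, ENNReal.toReal_pos hvolpos.ne' hΩbd.measure_lt_top.ne]
  set A' : ℝ≥0∞ := ENNReal.ofReal A with hA'_def
  have hA'pos : 0 < A' := ENNReal.ofReal_pos.2 hApos
  have hSA : ∀ r : ℝ, Φ r ≤ A ↔ μ {x | w x > r} ≤ A' := by
    intro r
    rw [hΦw r]
    exact (ENNReal.le_ofReal_iff_toReal_le (measure_ne_top μ _) hApos.le).symm
  -- S nonempty
  have hS_ne : Set.Nonempty {r : ℝ | Φ r ≤ A} := by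
    have hanti : Antitone (fun n : ℕ => {x | w x > (n:ℝ)}) := by
      intro n m hnm x hx
      simp only [Set.mem_setOf_eq] at hx ⊢
      have : (n:ℝ) ≤ m := by exact_mod_cast hnm
      linarith
    have hempty : (⋂ n : ℕ, {x | w x > (n:ℝ)}) = ∅ := by
      ext x
      simp only [Set.mem_iInter, Set.mem_setOf_eq, Set.mem_empty_iff_false, iff_false, not_forall,
        not_lt]
      obtain ⟨n, hn⟩ := exists_nat_gt (w x)
      exact ⟨n, hn.le⟩
    have hiInf := Directed.measure_iInter
      (fun n : ℕ => (measurableSet_lt measurable_const hwm).nullMeasurableSet)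
      hanti.directed_ge ⟨0, measure_ne_top μ _⟩
    rw [hempty, measure_empty] at hiInf
    have : ∃ n : ℕ, μ {x | w x > (n:ℝ)} < A' := by
      rw [← iInf_lt_iff, ← hiInf]
      exact hA'pos
    obtain ⟨n, hn⟩ := this
    exact ⟨(n:ℝ), (hSA _).2 hn.le⟩
  -- S bounded below
  have hS_bdd : BddBelow {r : ℝ | Φ r ≤ A} := by
    have hmono : Monotone (fun n : ℕ => {x | w x > -(n:ℝ)}) := by
      intro n m hnm x hx
      simp only [Set.mem_setOf_eq] at hx ⊢
      have : (n:ℝ) ≤ m := by exact_mod_cast hnm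
      linarith
    have huniv : (⋃ n : ℕ, {x | w x > -(n:ℝ)}) = Set.univ := by
      ext x
      simp only [Set.mem_iUnion, Set.mem_setOf_eq, Set.mem_univ, iff_true]
      obtain ⟨n, hn⟩ := exists_nat_gt (-(w x))
      exact ⟨n, by linarith⟩
    have hiSup := Directed.measure_iUnion (μ := μ) hmono.directed_le
    rw [huniv] at hiSup
    have : ∃ n : ℕ, A' < μ {x | w x > -(n:ℝ)} := by
      rw [← lt_iSup_iff, ← hiSup]
      rw [hA'_def]
      exact (ENNReal.ofReal_lt_iff_lt_toReal hApos.le (measure_ne_top μ _)).2 hAlt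
    obtain ⟨n, hn⟩ := this
    refine ⟨-(n:ℝ), fun r hr => ?_⟩
    by_contra hcon
    push_neg at hcon
    have hsub : {x | w x > -(n:ℝ)} ⊆ {x | w x > r} := fun x hx => lt_trans hcon hx
    exact absurd (le_trans (measure_mono hsub) ((hSA r).1 hr)) (not_le.2 hn)
  set r0 := Φinv A with hr0_def
  have hr0 : r0 = sInf {r : ℝ | Φ r ≤ A} := hΦinv A
  have hgt_r0 : ∀ r : ℝ, r0 < r → μ {x | w x > r} ≤ A' := by
    intro r hr
    obtain ⟨s, hsS, hs⟩ := exists_lt_of_csInf_lt hS_ne (by rw [← hr0]; exact hr)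
    refine le_trans (measure_mono fun x hx => lt_trans hs hx) ((hSA s).1 hsS)
  have hlt_r0 : ∀ r : ℝ, r < r0 → A' ≤ μ {x | w x > r} := by
    intro r hr
    have hnotS : r ∉ {r : ℝ | Φ r ≤ A} := by
      intro hr'
      exact absurd (hr0 ▸ csInf_le hS_bdd hr') (not_le.2 hr)
    have : A < Φ r := lt_of_not_ge hnotS
    rw [hΦw r] at this
    exact ENNReal.ofReal_le_of_le_toReal this.le
  have hh0 : 0 ≤ hvv := by rw [hhv]; exact le_max_left _ _
  have hr0_le : r0 ≤ hvv := by rw [hhv]; exact le_max_right _ _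
  -- F1
  have hF1 : μ {x | w x > hvv} ≤ A' := by
    have hcup : {x | w x > hvv} = ⋃ n : ℕ, {x | w x > hvv + 1/(n+1)} := by
      ext x
      simp only [Set.mem_iUnion, Set.mem_setOf_eq]
      constructor
      · intro hx
        obtain ⟨n, hn⟩ := exists_nat_one_div_lt (sub_pos.2 hx)
        exact ⟨n, by push_cast at hn ⊢; linarith⟩
      · rintro ⟨n, hn⟩
        have : (0:ℝ) < 1/(n+1) := by positivity
        linarith
    have hmono : Monotone (fun n : ℕ => {x | w x > hvv + 1/((n:ℝ)+1)}) := by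
      intro n m hnm x hx
      have h1 : (1:ℝ)/((m:ℝ)+1) ≤ 1/((n:ℝ)+1) := by
        apply one_div_le_one_div_of_le (by positivity)
        have : (n:ℝ) ≤ m := by exact_mod_cast hnm
        linarith
      simp only [Set.mem_setOf_eq] at hx ⊢
      linarith
    rw [hcup, Directed.measure_iUnion hmono.directed_le]
    refine iSup_le fun n => hgt_r0 _ ?_
    have : (0:ℝ) < 1/((n:ℝ)+1) := by positivity
    linarith
  -- F2
  have hF2 : 0 < hvv → A' ≤ μ {x | w x ≥ hvv} := by
    intro hp
    have hr0pos : 0 < r0 := by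
      by_contra hcon
      push_neg at hcon
      rw [hhv, max_eq_left hcon] at hp
      exact lt_irrefl 0 hp
    have hveq : hvv = r0 := by rw [hhv, max_eq_right hr0pos.le]
    have hcap : {x | w x ≥ hvv} = ⋂ n : ℕ, {x | w x > hvv - 1/((n:ℝ)+1)} := by
      ext x
      simp only [Set.mem_iInter, Set.mem_setOf_eq]
      constructor
      · intro hx n
        have : (0:ℝ) < 1/((n:ℝ)+1) := by positivity
        linarith
      · intro hx
        by_contra hcon
        push_neg at hcon
        obtain ⟨n, hn⟩ := exists_nat_one_div_lt (sub_pos.2 hcon)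
        have := hx n
        push_cast at hn
        linarith
    have hanti : Antitone (fun n : ℕ => {x | w x > hvv - 1/((n:ℝ)+1)}) := by
      intro n m hnm x hx
      have h1 : (1:ℝ)/((m:ℝ)+1) ≤ 1/((n:ℝ)+1) := by
        apply one_div_le_one_div_of_le (by positivity)
        have : (n:ℝ) ≤ m := by exact_mod_cast hnm
        linarith
      simp only [Set.mem_setOf_eq] at hx ⊢
      linarith
    rw [hcap, Directed.measure_iInter
      (fun n => (measurableSet_lt measurable_const hwm).nullMeasurableSet)
      hanti.directed_ge ⟨0, measure_ne_top μ _⟩]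
    refine le_iInf fun n => hlt_r0 _ ?_
    have : (0:ℝ) < 1/((n:ℝ)+1) := by positivity
    rw [hveq]
    linarith
  set M := (μ {x | w x > hvv}).toReal with hM_def
  set E := (μ {x | w x = hvv}).toReal with hE_def
  have hs1w : MeasurableSet {x | w x > hvv} := measurableSet_lt measurable_const hwm
  have hs2w : MeasurableSet {x | w x = hvv} := hwm (measurableSet_singleton hvv)
  have hM_le : M ≤ A := (ENNReal.le_ofReal_iff_toReal_le (measure_ne_top μ _) hApos.le).1 hF1
  have hME : 0 < hvv → A ≤ M + E := by
    intro hp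
    have hsets : {x | w x ≥ hvv} = {x | w x > hvv} ∪ {x | w x = hvv} := by
      ext x
      simp only [Set.mem_setOf_eq, Set.mem_union, ge_iff_le]
      constructor
      · intro hx
        rcases lt_or_eq_of_le hx with h | h
        · exact Or.inl h
        · exact Or.inr h.symm
      · rintro (h | h)
        · exact h.le
        · exact h.ge
    have hdisj : Disjoint {x | w x > hvv} {x | w x = hvv} := by
      rw [Set.disjoint_left]
      intro x hx1 hx2
      simp only [Set.mem_setOf_eq] at hx1 hx2
      linarith [hx2.ge]
    have hsplit : μ {x | w x ≥ hvv} = μ {x | w x > hvv} + μ {x | w x = hvv} := by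
      rw [hsets]
      exact measure_union hdisj hs2w
    have h2 := hF2 hp
    rw [hsplit] at h2
    have h3 : A ≤ (μ {x | w x > hvv} + μ {x | w x = hvv}).toReal := by
      refine (ENNReal.ofReal_le_iff_le_toReal ?_).1 h2
      exact (ENNReal.add_lt_top.2 ⟨measure_lt_top μ _, measure_lt_top μ _⟩).ne
    rwa [ENNReal.toReal_add (measure_ne_top μ _) (measure_ne_top μ _)] at h3
  have hv_int : Integrable v μ := hv.integrable one_le_two
  have hw_int : Integrable w μ := hv_int.congr hvw
  have hustar01 := hustar.2.1
  have hustar_m : AEStronglyMeasurable ustar μ := hustar.1.1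
  have hconv : ∀ u : (Fin d → ℝ) → ℝ, (∫ x, u x * v x ∂μ) = ∫ x, u x * w x ∂μ := fun u =>
    integral_congr_ae (by filter_upwards [hvw] with x hx; rw [hx])
  constructor
  · -- forward direction: maximiser implies canonical form
    intro hmax
    set t : ℝ := if h' : 0 < hvv ∧ E ≠ 0 then (A - M)/E else 0 with ht_def
    have hEnn : 0 ≤ E := ENNReal.toReal_nonneg
    have hMnn : 0 ≤ M := ENNReal.toReal_nonneg
    have ht0 : 0 ≤ t := by
      rw [ht_def]
      split_ifs with h'
      · exact div_nonneg (by linarith) hEnn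
      · exact le_refl 0
    have ht1 : t ≤ 1 := by
      rw [ht_def]
      split_ifs with h'
      · rw [div_le_one (lt_of_le_of_ne hEnn (Ne.symm h'.2))]
        linarith [hME h'.1]
      · linarith
    have ht_mul : 0 < hvv → t * E = A - M := by
      intro hp
      by_cases hE : E = 0
      · have h1 := hME hp
        rw [hE, mul_zero]
        rw [hE] at h1
        linarith
      · rw [ht_def, dif_pos ⟨hp, hE⟩, div_mul_cancel₀ _ hE]
    set u0 : (Fin d → ℝ) → ℝ := fun x => Set.indicator {y | w y > hvv} (fun _ => (1:ℝ)) x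
      + t * Set.indicator {y | w y = hvv} (fun _ => (1:ℝ)) x with hu0_def
    have hu0m : Measurable u0 := by
      apply Measurable.add
      · exact measurable_const.indicator hs1w
      · exact (measurable_const.indicator hs2w).const_mul t
    have hu0_eval_gt : ∀ x, hvv < w x → u0 x = 1 := by
      intro x hx
      simp only [hu0_def, Set.indicator_apply, Set.mem_setOf_eq]
      rw [if_pos hx, if_neg (by intro h; linarith [h.ge])]
      ring
    have hu0_eval_eq : ∀ x, w x = hvv → u0 x = t := by
      intro x hx
      simp only [hu0_def, Set.indicator_apply, Set.mem_setOf_eq]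
      rw [if_neg (by intro h; linarith [hx.le]), if_pos hx]
      ring
    have hu0_eval_lt : ∀ x, w x < hvv → u0 x = 0 := by
      intro x hx
      simp only [hu0_def, Set.indicator_apply, Set.mem_setOf_eq]
      rw [if_neg (by intro h; linarith), if_neg (by intro h; linarith [h.le])]
      ring
    have hu0_bdd : ∀ x, 0 ≤ u0 x ∧ u0 x ≤ 1 := by
      intro x
      rcases lt_trichotomy (w x) hvv with hlt | heq | hgt
      · rw [hu0_eval_lt x hlt]; constructor <;> norm_num
      · rw [hu0_eval_eq x heq]; exact ⟨ht0, ht1⟩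
      · rw [hu0_eval_gt x hgt]; constructor <;> norm_num
    have hu0_mem : MemLp u0 2 μ := by
      refine MemLp.of_bound hu0m.aestronglyMeasurable 1 ?_
      refine Filter.Eventually.of_forall fun x => ?_
      rw [Real.norm_eq_abs, abs_le]
      exact ⟨by linarith [(hu0_bdd x).1], (hu0_bdd x).2⟩
    have hu0_int_val : (∫ x, u0 x ∂μ) = M + t * E := by
      have i1 : Integrable (fun x => Set.indicator {y | w y > hvv} (fun _ => (1:ℝ)) x) μ :=
        (integrable_const 1).indicator hs1w
      have i2 : Integrable (fun x => t * Set.indicator {y | w y = hvv} (fun _ => (1:ℝ)) x) μ :=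
        ((integrable_const 1).indicator hs2w).const_mul t
      rw [hu0_def]
      rw [integral_add i1 i2, integral_indicator hs1w, setIntegral_const, integral_const_mul,
        integral_indicator hs2w, setIntegral_const]
      simp only [smul_eq_mul, mul_one, Measure.real]
      rfl
    have hu0A : (∫ x, u0 x ∂μ) ≤ A := by
      rw [hu0_int_val]
      by_cases hp : 0 < hvv
      · linarith [ht_mul hp]
      · have ht0' : t = 0 := by
          rw [ht_def, dif_neg]
          intro h
          exact hp h.1
        rw [ht0', zero_mul]
        linarith
    have hle1 : (∫ x, u0 x * w x ∂μ) ≤ ∫ x, ustar x * w x ∂μ := by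
      rw [← hconv u0, ← hconv ustar]
      exact hmax u0 hu0_mem (Filter.Eventually.of_forall hu0_bdd) hu0A
    have hle2 : (∫ x, ustar x * w x ∂μ) ≤ ∫ x, u0 x * w x ∂μ := by
      refine bathtub_core μ w hwm hw_int hvv A hh0 u0 ustar hu0m.aestronglyMeasurable
        (Filter.Eventually.of_forall hu0_bdd) hustar_m hustar01 hustar.2.2
        (fun _ => t) measurable_const (fun _ => ⟨ht0, ht1⟩)
        (Filter.Eventually.of_forall fun x => rfl) ?_
      intro hp
      rw [setIntegral_const, smul_eq_mul, mul_comm]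
      simp only [Measure.real]
      linarith [ht_mul hp]
    have hIeq : (∫ x, u0 x * w x ∂μ) = ∫ x, ustar x * w x ∂μ := le_antisymm hle1 hle2
    have hustar_int : Integrable ustar μ := by
      refine Integrable.mono' (integrable_const 1) hustar_m ?_
      filter_upwards [hustar01] with x ⟨a, b⟩
      rw [Real.norm_eq_abs, abs_le]
      exact ⟨by linarith, b⟩
    have hu0_int : Integrable u0 μ := by
      refine Integrable.mono' (integrable_const 1) hu0m.aestronglyMeasurable ?_
      refine Filter.Eventually.of_forall fun x => ?_
      rw [Real.norm_eq_abs, abs_le]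
      exact ⟨by linarith [(hu0_bdd x).1], (hu0_bdd x).2⟩
    have hu0w_int : Integrable (fun x => u0 x * w x) μ := by
      refine hw_int.bdd_mul (c := 1) hu0m.aestronglyMeasurable ?_
      refine Filter.Eventually.of_forall fun x => ?_
      rw [Real.norm_eq_abs, abs_le]
      exact ⟨by linarith [(hu0_bdd x).1], (hu0_bdd x).2⟩
    have hustarw_int : Integrable (fun x => ustar x * w x) μ := by
      refine hw_int.bdd_mul (c := 1) hustar_m ?_
      filter_upwards [hustar01] with x ⟨a, b⟩
      rw [Real.norm_eq_abs, abs_le]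
      exact ⟨by linarith, b⟩
    have hg_int : Integrable (fun x => (u0 x - ustar x) * (w x - hvv)) μ := by
      have comb : Integrable
          (fun x => u0 x * w x - ustar x * w x - (hvv * u0 x - hvv * ustar x)) μ :=
        (hu0w_int.sub hustarw_int).sub ((hu0_int.const_mul hvv).sub (hustar_int.const_mul hvv))
      exact comb.congr (Filter.Eventually.of_forall fun x => by ring)
    have hg_exp : (∫ x, (u0 x - ustar x) * (w x - hvv) ∂μ)
        = ((∫ x, u0 x * w x ∂μ) - ∫ x, ustar x * w x ∂μ)
          - hvv * ((∫ x, u0 x ∂μ) - ∫ x, ustar x ∂μ) := by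
      have e0 : ∀ x, (u0 x - ustar x) * (w x - hvv)
          = u0 x * w x - ustar x * w x - (hvv * u0 x - hvv * ustar x) := fun x => by ring
      have i1 : Integrable (fun a => u0 a * w a - ustar a * w a) μ := hu0w_int.sub hustarw_int
      have i3 : Integrable (fun a => hvv * u0 a) μ := hu0_int.const_mul hvv
      have i4 : Integrable (fun a => hvv * ustar a) μ := hustar_int.const_mul hvv
      have i2 : Integrable (fun a => hvv * u0 a - hvv * ustar a) μ := i3.sub i4
      rw [integral_congr_ae (Filter.Eventually.of_forall e0)]
      rw [integral_sub i1 i2, integral_sub hu0w_int hustarw_int, integral_sub i3 i4,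
        integral_const_mul, integral_const_mul]
      ring
    have hg_nonneg : 0 ≤ᵐ[μ] fun x => (u0 x - ustar x) * (w x - hvv) := by
      filter_upwards [hustar01] with x ⟨h0, h1⟩
      simp only [Pi.zero_apply]
      rcases lt_trichotomy (w x) hvv with hlt | heq | hgt
      · rw [hu0_eval_lt x hlt]; nlinarith
      · rw [heq]; simp
      · rw [hu0_eval_gt x hgt]; nlinarith
    have hg_zero : (∫ x, (u0 x - ustar x) * (w x - hvv) ∂μ) = 0
        ∧ (0 < hvv → (∫ x, ustar x ∂μ) = A) := by
      by_cases hp : 0 < hvv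
      · have hu0A' : (∫ x, u0 x ∂μ) = A := by rw [hu0_int_val]; linarith [ht_mul hp]
        have hs_le : (∫ x, ustar x ∂μ) ≤ A := hustar.2.2
        have hnn : 0 ≤ ∫ x, (u0 x - ustar x) * (w x - hvv) ∂μ := integral_nonneg_of_ae hg_nonneg
        have heq2 : (∫ x, (u0 x - ustar x) * (w x - hvv) ∂μ)
            = - (hvv * (A - ∫ x, ustar x ∂μ)) := by
          rw [hg_exp, hIeq, hu0A']; ring
        have hfac : 0 ≤ hvv * (A - ∫ x, ustar x ∂μ) :=
          mul_nonneg hp.le (by linarith)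
        constructor
        · linarith
        · intro _
          nlinarith
      · have hvv0 : hvv = 0 := le_antisymm (not_lt.1 hp) hh0
        constructor
        · rw [hg_exp, hIeq, hvv0]; ring
        · intro h; exact absurd h hp
    have hgae : (fun x => (u0 x - ustar x) * (w x - hvv)) =ᵐ[μ] 0 :=
      (integral_eq_zero_iff_of_nonneg_ae hg_nonneg hg_int).1 hg_zero.1
    have hP : ∀ᵐ x ∂μ, (hvv < w x → ustar x = 1) ∧ (w x < hvv → ustar x = 0) := by
      filter_upwards [hgae] with x hgx
      simp only [Pi.zero_apply] at hgx
      constructor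
      · intro hgt
        rw [hu0_eval_gt x hgt] at hgx
        rcases mul_eq_zero.1 hgx with h | h
        · linarith
        · linarith
      · intro hlt
        rw [hu0_eval_lt x hlt] at hgx
        rcases mul_eq_zero.1 hgx with h | h
        · linarith
        · linarith
    set c : (Fin d → ℝ) → ℝ := fun x => max 0 (min 1 (hustar_m.mk ustar x)) with hc_def
    have hcm : Measurable c :=
      measurable_const.max (measurable_const.min hustar_m.stronglyMeasurable_mk.measurable)
    have hc01' : ∀ x, 0 ≤ c x ∧ c x ≤ 1 :=
      fun x => ⟨le_max_left _ _, max_le (by norm_num) (min_le_left _ _)⟩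
    have hc_eq : ∀ᵐ x ∂μ, c x = ustar x := by
      filter_upwards [hustar_m.ae_eq_mk, hustar01] with x h1 ⟨hb0, hb1⟩
      simp only [hc_def]
      rw [← h1, min_eq_right hb1, max_eq_right hb0]
    have hkey2 : (∫ x in {y | v y = hvv}, c x ∂μ) = (∫ x, ustar x ∂μ) - M := by
      have s1 : (∫ x in {y | v y = hvv}, c x ∂μ) = ∫ x in {y | w y = hvv}, c x ∂μ :=
        setIntegral_congr_set hset_eq
      have s2 : (∫ x in {y | w y = hvv}, c x ∂μ) = ∫ x in {y | w y = hvv}, ustar x ∂μ :=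
        integral_congr_ae (ae_restrict_of_ae hc_eq)
      have s3 : (∫ x, ustar x ∂μ) = M + ∫ x in {y | w y = hvv}, ustar x ∂μ := by
        have hrep : ∀ᵐ x ∂μ, ustar x = Set.indicator {y | w y > hvv} (fun _ => (1:ℝ)) x
            + Set.indicator {y | w y = hvv} ustar x := by
          filter_upwards [hP] with x ⟨hx1, hx2⟩
          simp only [Set.indicator_apply, Set.mem_setOf_eq]
          rcases lt_trichotomy (w x) hvv with hlt | heq | hgt
          · rw [if_neg (by intro h; linarith), if_neg (by intro h; linarith [h.le]), hx2 hlt]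
            ring
          · rw [if_neg (by intro h; linarith [heq.le]), if_pos heq]
            ring
          · rw [if_pos hgt, if_neg (by intro h; linarith [h.ge]), hx1 hgt]
            ring
        rw [integral_congr_ae hrep,
          integral_add ((integrable_const 1).indicator hs1w) (hustar_int.indicator hs2w),
          integral_indicator hs1w, setIntegral_const, integral_indicator hs2w]
        simp only [smul_eq_mul, mul_one, Measure.real]
        rfl
      rw [s1, s2]
      linarith
    refine ⟨c, hcm, hc01', ?_, ?_, ?_⟩
    · intro hp
      have hMM : (μ {y | v y > hvv}).toReal = M := by rw [hμgt hvv]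
      rw [hkey2, hg_zero.2 hp, hMM]
    · intro h0
      have hMM : (μ {y | v y > hvv}).toReal = M := by rw [hμgt hvv]
      rw [hkey2, hMM]
      linarith [hustar.2.2]
    · filter_upwards [hP, hvw, hc_eq] with x hx12 hvx hcx
      obtain ⟨hx1, hx2⟩ := hx12
      simp only [Set.indicator_apply, Set.mem_setOf_eq]
      rcases lt_trichotomy (v x) hvv with hlt | heq | hgt
      · have hwlt : w x < hvv := by rw [← hvx]; exact hlt
        rw [if_neg (by intro h; linarith), if_neg (by intro h; linarith [h.le]), hx2 hwlt]
        ring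
      · rw [if_neg (by intro h; linarith [heq.le]), if_pos heq, ← hcx]
        ring
      · have hwgt : hvv < w x := by rw [← hvx]; exact hgt
        rw [if_pos hgt, if_neg (by intro h; linarith [h.ge]), hx1 hwgt]
        ring
  · -- backward direction: canonical form implies maximiser
    rintro ⟨c, hcm, hc01, hposc, hzeroc, hdecomp⟩ u hu2 hu01 huA
    have hdecomp_w : ∀ᵐ x ∂μ, ustar x = Set.indicator {y | w y > hvv} (fun _ => (1:ℝ)) x
        + c x * Set.indicator {y | w y = hvv} (fun _ => (1:ℝ)) x := by
      filter_upwards [hdecomp, hvw] with x hx hvx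
      simp only [Set.indicator_apply, Set.mem_setOf_eq] at hx ⊢
      simp only [hvx] at hx
      exact hx
    have hsum_w : 0 < hvv →
        (μ {y | w y > hvv}).toReal + (∫ x in {y | w y = hvv}, c x ∂μ) = A := by
      intro hp
      have h1 := hposc hp
      rw [setIntegral_congr_set hset_eq, hμgt hvv] at h1
      linarith
    calc (∫ x, u x * v x ∂μ) = ∫ x, u x * w x ∂μ := hconv u
      _ ≤ ∫ x, ustar x * w x ∂μ :=
          bathtub_core μ w hwm hw_int hvv A hh0 ustar u hustar_m hustar01 hu2.1 hu01 huA
            c hcm hc01 hdecomp_w hsum_w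
      _ = ∫ x, ustar x * v x ∂μ := (hconv ustar).symm
end

section
/- Relaxed bathtub principle (uniqueness under null level sets): Let v ∈ L²(Ω) be such that every level set of v is Lebesgue-null, i.e. |{x ∈ Ω : v(x) = λ}| = 0 for all λ ∈ ℝ. Then the maximisation of u ↦ ∫_Ω u·v over Ū_L has the unique maximiser u* = χ_{{v > h(v)}} (up to a.e. equality), and the maximum value equals ∫_{{v > h(v)}} v. -/
open MeasureTheory
open scoped ENNReal

/-- Relaxed bathtub principle (uniqueness under null level sets): if all level sets
of `v` are Lebesgue-null, then `χ_{v>h(v)}` is the unique (up to a.e. equality)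
maximiser of `u ↦ ∫ u v` over `Ū_L`, and the maximum value equals `∫_{v>h(v)} v`. -/
theorem relaxed_bathtub_uniqueness
    (d : ℕ) (hd : 1 ≤ d)
    (Ω : Set (Fin d → ℝ)) (hΩne : Ω.Nonempty) (hΩop : IsOpen Ω)
    (hΩbd : Bornology.IsBounded Ω)
    (L : ℝ) (hL : L ∈ Set.Ioo (0 : ℝ) 1)
    (μ : Measure (Fin d → ℝ)) (hμ : μ = volume.restrict Ω)
    (v : (Fin d → ℝ) → ℝ) (hv : MemLp v 2 μ)
    (hlevel : ∀ l : ℝ, μ {x | v x = l} = 0)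
    (Φ : ℝ → ℝ) (hΦ : ∀ r : ℝ, Φ r = (μ {x | v x > r}).toReal)
    (Φinv : ℝ → ℝ) (hΦinv : ∀ s : ℝ, Φinv s = sInf {r : ℝ | Φ r ≤ s})
    (A : ℝ) (hA : A = L * (volume Ω).toReal)
    (hvv : ℝ) (hhv : hvv = max 0 (Φinv A))
    (ustar : (Fin d → ℝ) → ℝ)
    (hustar : ustar = Set.indicator {y | v y > hvv} (fun _ => (1:ℝ))) :
    (MemLp ustar 2 μ ∧ (∀ᵐ x ∂μ, 0 ≤ ustar x ∧ ustar x ≤ 1) ∧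
      (∫ x, ustar x ∂μ) ≤ A) ∧
    (∀ u : (Fin d → ℝ) → ℝ, MemLp u 2 μ →
      (∀ᵐ x ∂μ, 0 ≤ u x ∧ u x ≤ 1) → (∫ x, u x ∂μ) ≤ A →
      (∫ x, u x * v x ∂μ) ≤ ∫ x, ustar x * v x ∂μ) ∧
    (∀ u : (Fin d → ℝ) → ℝ, MemLp u 2 μ →
      (∀ᵐ x ∂μ, 0 ≤ u x ∧ u x ≤ 1) → (∫ x, u x ∂μ) ≤ A →
      (∫ x, u x * v x ∂μ) = (∫ x, ustar x * v x ∂μ) →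
      u =ᵐ[μ] ustar) ∧
    (∫ x, ustar x * v x ∂μ) = ∫ x in {y | v y > hvv}, v x ∂μ := by
  obtain ⟨hL0, hL1⟩ := hL
  haveI hμfin : IsFiniteMeasure μ := by
    rw [hμ]
    exact ⟨by simpa [Measure.restrict_apply_univ] using hΩbd.measure_lt_top⟩
  have hμuniv : μ Set.univ = volume Ω := by
    rw [hμ, Measure.restrict_apply_univ]
  have hμtop : μ Set.univ ≠ ⊤ := measure_ne_top μ _
  have hMpos : 0 < (μ Set.univ).toReal := by
    rw [hμuniv]
    exact ENNReal.toReal_pos (hΩop.measure_pos volume hΩne).ne'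
      (by rw [← hμuniv]; exact hμtop)
  have hA0 : 0 < A := by
    rw [hA]; exact mul_pos hL0 (by rw [← hμuniv]; exact hMpos)
  have hAM : A < (μ Set.univ).toReal := by
    rw [hA, hμuniv]
    rw [hμuniv] at hMpos
    nlinarith
  -- measurable representative
  set g := hv.1.mk v with hgdef
  have hgm : StronglyMeasurable g := hv.1.stronglyMeasurable_mk
  have hvg : v =ᵐ[μ] g := hv.1.ae_eq_mk
  have hgmeas : Measurable g := hgm.measurable
  have hsets : ∀ r : ℝ, μ {x | v x > r} = μ {x | g x > r} := by
    intro r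
    refine measure_congr (hvg.mono fun x hx => ?_)
    show (r < v x) = (r < g x)
    rw [hx]
  have hseteq : ∀ l : ℝ, μ {x | g x = l} = 0 := by
    intro l
    rw [← hlevel l]
    refine (measure_congr (hvg.mono fun x hx => ?_)).symm
    show (v x = l) = (g x = l)
    rw [hx]
  have hTm : ∀ r : ℝ, MeasurableSet {x | g x > r} := fun r => hgmeas measurableSet_Ioi
  have hΦg : ∀ r : ℝ, Φ r = (μ {x | g x > r}).toReal := fun r => by rw [hΦ, hsets]
  have hΦanti : Antitone Φ := by
    intro r s hrs
    rw [hΦg, hΦg]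
    exact ENNReal.toReal_mono (measure_ne_top μ _)
      (measure_mono fun x hx => lt_of_le_of_lt hrs hx)
  set S₀ : Set ℝ := {r : ℝ | Φ r ≤ A} with hS₀def
  -- S₀ is nonempty
  have hS₀ne : S₀.Nonempty := by
    have hanti : Antitone fun n : ℕ => {x | g x > (n : ℝ)} := by
      intro m n hmn x hx
      have hx' : (n : ℝ) < g x := hx
      have hc : (m : ℝ) ≤ (n : ℝ) := by exact_mod_cast hmn
      show (m : ℝ) < g x
      linarith
    have hiter : (⋂ n : ℕ, {x | g x > (n : ℝ)}) = ∅ := by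
      ext x
      simp only [Set.mem_iInter, Set.mem_setOf_eq, Set.mem_empty_iff_false, iff_false, not_forall]
      obtain ⟨n, hn⟩ := exists_nat_gt (g x)
      exact ⟨n, not_lt.2 hn.le⟩
    have hten := tendsto_measure_iInter_atTop (μ := μ)
      (s := fun n : ℕ => {x | g x > (n : ℝ)})
      (fun n => (hTm _).nullMeasurableSet) hanti ⟨0, measure_ne_top μ _⟩
    rw [hiter, measure_empty] at hten
    have hev : ∀ᶠ n : ℕ in Filter.atTop, μ {x | g x > (n : ℝ)} < ENNReal.ofReal A :=
      hten.eventually (gt_mem_nhds (by simpa using ENNReal.ofReal_pos.2 hA0))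
    obtain ⟨n, hn⟩ := hev.exists
    refine ⟨(n : ℝ), ?_⟩
    show Φ (n : ℝ) ≤ A
    rw [hΦg]
    exact ENNReal.toReal_le_of_le_ofReal hA0.le hn.le
  -- S₀ is bounded below
  have hbdd : BddBelow S₀ := by
    have hmono : Monotone fun n : ℕ => {x | g x > -(n : ℝ)} := by
      intro m n hmn x hx
      have hx' : -(m : ℝ) < g x := hx
      have hc : (m : ℝ) ≤ (n : ℝ) := by exact_mod_cast hmn
      show -(n : ℝ) < g x
      linarith
    have hiun : (⋃ n : ℕ, {x | g x > -(n : ℝ)}) = Set.univ := by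
      ext x
      simp only [Set.mem_iUnion, Set.mem_setOf_eq, Set.mem_univ, iff_true]
      obtain ⟨n, hn⟩ := exists_nat_gt (-(g x))
      exact ⟨n, by linarith⟩
    have hten := tendsto_measure_iUnion_atTop (μ := μ) hmono
    rw [hiun] at hten
    have hlt : ENNReal.ofReal A < μ Set.univ := by
      rw [ENNReal.ofReal_lt_iff_lt_toReal hA0.le hμtop]
      exact hAM
    have hev : ∀ᶠ n : ℕ in Filter.atTop, ENNReal.ofReal A < μ {x | g x > -(n : ℝ)} :=
      hten.eventually (lt_mem_nhds hlt)
    obtain ⟨n, hn⟩ := hev.exists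
    refine ⟨-(n : ℝ), fun r hr => ?_⟩
    by_contra hcon
    push_neg at hcon
    have h1 : A < Φ (-(n : ℝ)) := by
      rw [hΦg]
      rw [ENNReal.ofReal_lt_iff_lt_toReal hA0.le (measure_ne_top μ _)] at hn
      exact hn
    have h2 : Φ (-(n : ℝ)) ≤ Φ r := hΦanti hcon.le
    have h3 : Φ r ≤ A := hr
    linarith
  have hΦinvA : Φinv A = sInf S₀ := hΦinv A
  have hvv0 : 0 ≤ hvv := by rw [hhv]; exact le_max_left _ _
  have hvvge : Φinv A ≤ hvv := by rw [hhv]; exact le_max_right _ _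
  -- key1 : Φ hvv ≤ A
  have key1 : Φ hvv ≤ A := by
    have step : ∀ n : ℕ, Φ (hvv + 1 / ((n : ℝ) + 1)) ≤ A := by
      intro n
      have heps : 0 < 1 / ((n : ℝ) + 1) := by positivity
      have hlt : sInf S₀ < sInf S₀ + 1 / ((n : ℝ) + 1) := lt_add_of_pos_right _ heps
      obtain ⟨r, hrS, hrlt⟩ := (csInf_lt_iff hbdd hS₀ne).1 hlt
      have hrle : r ≤ hvv + 1 / ((n : ℝ) + 1) := by
        have := hΦinvA ▸ hvvge
        linarith
      exact le_trans (hΦanti hrle) hrS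
    have hmono : Monotone fun n : ℕ => {x | g x > hvv + 1 / ((n : ℝ) + 1)} := by
      intro m n hmn x hx
      have hx' : hvv + 1 / ((m : ℝ) + 1) < g x := hx
      have hc : (m : ℝ) ≤ (n : ℝ) := by exact_mod_cast hmn
      have h1n : 1 / ((n : ℝ) + 1) ≤ 1 / ((m : ℝ) + 1) :=
        one_div_le_one_div_of_le (by positivity) (by linarith)
      show hvv + 1 / ((n : ℝ) + 1) < g x
      linarith
    have hiun : (⋃ n : ℕ, {x | g x > hvv + 1 / ((n : ℝ) + 1)}) = {x | g x > hvv} := by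
      ext x
      simp only [Set.mem_iUnion, Set.mem_setOf_eq]
      constructor
      · rintro ⟨n, hn⟩
        have : 0 < 1 / ((n : ℝ) + 1) := by positivity
        linarith
      · intro hx
        obtain ⟨n, hn⟩ := exists_nat_one_div_lt (sub_pos.2 hx)
        exact ⟨n, by linarith⟩
    have hten := tendsto_measure_iUnion_atTop (μ := μ) hmono
    rw [hiun] at hten
    have hle : μ {x | g x > hvv} ≤ ENNReal.ofReal A := by
      refine le_of_tendsto hten (Filter.Eventually.of_forall fun n => ?_)
      show μ {x | g x > hvv + 1 / ((n : ℝ) + 1)} ≤ ENNReal.ofReal A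
      rw [ENNReal.le_ofReal_iff_toReal_le (measure_ne_top μ _) hA0.le, ← hΦg]
      exact step n
    rw [hΦg]
    exact ENNReal.toReal_le_of_le_ofReal hA0.le hle
  -- key2 : if hvv > 0 then A ≤ Φ hvv
  have key2 : 0 < hvv → A ≤ Φ hvv := by
    intro hpos
    have hinvpos : hvv = Φinv A := by
      rcases le_or_gt (Φinv A) 0 with h | h
      · exfalso; rw [hhv, max_eq_left h] at hpos; exact lt_irrefl _ hpos
      · rw [hhv, max_eq_right h.le]
    have hlow : ∀ r : ℝ, r < hvv → A < Φ r := by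
      intro r hr
      have hnm : r ∉ S₀ := notMem_of_lt_csInf (by rw [← hΦinvA, ← hinvpos]; exact hr) hbdd
      have : ¬ Φ r ≤ A := hnm
      linarith
    have hanti : Antitone fun n : ℕ => {x | g x > hvv - 1 / ((n : ℝ) + 1)} := by
      intro m n hmn x hx
      have hx' : hvv - 1 / ((n : ℝ) + 1) < g x := hx
      have hc : (m : ℝ) ≤ (n : ℝ) := by exact_mod_cast hmn
      have h1n : 1 / ((n : ℝ) + 1) ≤ 1 / ((m : ℝ) + 1) :=
        one_div_le_one_div_of_le (by positivity) (by linarith)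
      show hvv - 1 / ((m : ℝ) + 1) < g x
      linarith
    have hiter : (⋂ n : ℕ, {x | g x > hvv - 1 / ((n : ℝ) + 1)}) = {x | g x ≥ hvv} := by
      ext x
      simp only [Set.mem_iInter, Set.mem_setOf_eq]
      constructor
      · intro h
        by_contra hcon
        push_neg at hcon
        obtain ⟨n, hn⟩ := exists_nat_one_div_lt (sub_pos.2 hcon)
        have := h n
        linarith
      · intro h n
        have : 0 < 1 / ((n : ℝ) + 1) := by positivity
        linarith
    have hten := tendsto_measure_iInter_atTop (μ := μ)
      (s := fun n : ℕ => {x | g x > hvv - 1 / ((n : ℝ) + 1)})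
      (fun n => (hTm _).nullMeasurableSet) hanti ⟨0, measure_ne_top μ _⟩
    rw [hiter] at hten
    have hge : ENNReal.ofReal A ≤ μ {x | g x ≥ hvv} := by
      refine ge_of_tendsto hten (Filter.Eventually.of_forall fun n => ?_)
      show ENNReal.ofReal A ≤ μ {x | g x > hvv - 1 / ((n : ℝ) + 1)}
      have h1 : hvv - 1 / ((n : ℝ) + 1) < hvv := by
        have : 0 < 1 / ((n : ℝ) + 1) := by positivity
        linarith
      have h2 := hlow _ h1
      rw [hΦg] at h2
      exact ENNReal.ofReal_le_of_le_toReal h2.le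
    have hsplit : μ {x | g x ≥ hvv} ≤ μ {x | g x > hvv} := by
      have hsub : {x | g x ≥ hvv} ⊆ {x | g x > hvv} ∪ {x | g x = hvv} := by
        intro x hx
        have hx' : hvv ≤ g x := hx
        rcases lt_or_eq_of_le hx' with h | h
        · exact Or.inl h
        · exact Or.inr h.symm
      calc μ {x | g x ≥ hvv} ≤ μ ({x | g x > hvv} ∪ {x | g x = hvv}) := measure_mono hsub
        _ ≤ μ {x | g x > hvv} + μ {x | g x = hvv} := measure_union_le _ _
        _ = μ {x | g x > hvv} := by rw [hseteq hvv, add_zero]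
    rw [hΦg, ← ENNReal.ofReal_le_iff_le_toReal (measure_ne_top μ _)]
    exact le_trans hge hsplit
  -- the indicator set and its measurable version
  set S : Set (Fin d → ℝ) := {y | v y > hvv} with hSdef
  set T : Set (Fin d → ℝ) := {x | g x > hvv} with hTdef
  have hST : S =ᵐ[μ] T := hvg.mono fun x hx => by
    show (hvv < v x) = (hvv < g x)
    rw [hx]
  have hmemST : ∀ x, v x = g x → (x ∈ S ↔ x ∈ T) := by
    intro x hx
    show hvv < v x ↔ hvv < g x
    rw [hx]
  have hwiT : ustar =ᵐ[μ] Set.indicator T (fun _ => (1:ℝ)) := by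
    refine hvg.mono fun x hx => ?_
    rw [hustar]
    by_cases h : x ∈ T
    · rw [Set.indicator_of_mem ((hmemST x hx).2 h), Set.indicator_of_mem h]
    · rw [Set.indicator_of_notMem (fun hs => h ((hmemST x hx).1 hs)),
        Set.indicator_of_notMem h]
  have hwmem : MemLp ustar 2 μ :=
    ((memLp_const (1:ℝ)).indicator (hTm hvv)).ae_eq hwiT.symm
  have hw01 : ∀ᵐ x ∂μ, 0 ≤ ustar x ∧ ustar x ≤ 1 := by
    refine Filter.Eventually.of_forall fun x => ?_
    rw [hustar]
    by_cases h : x ∈ S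
    · rw [Set.indicator_of_mem h]; norm_num
    · rw [Set.indicator_of_notMem h]; norm_num
  have hwint : ∫ x, ustar x ∂μ = Φ hvv := by
    rw [integral_congr_ae hwiT, integral_indicator_const (1:ℝ) (hTm hvv), hΦg, ← hTdef]
    simp [measureReal_def]
  -- integrability of products
  have hmul : ∀ u : (Fin d → ℝ) → ℝ, MemLp u 2 μ →
      Integrable (fun x => u x * v x) μ := by
    intro u hu
    have h2 : (1 : ℝ≥0∞) / 1 = 1 / 2 + 1 / 2 := by
      rw [ENNReal.div_add_div_same]
      norm_num
      exact (ENNReal.div_self two_ne_zero ENNReal.ofNat_ne_top).symm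
    have := hv.smul (𝕜 := ℝ) (r := 1) hu (hpqr := ⟨by rw [ENNReal.inv_two_add_inv_two, inv_one]⟩)
    rw [← memLp_one_iff_integrable]
    exact this
  -- decomposition identity
  have hdec : ∀ u : (Fin d → ℝ) → ℝ, MemLp u 2 μ →
      (∫ x, (ustar x - u x) * (v x - hvv) ∂μ) =
        (∫ x, ustar x * v x ∂μ) - (∫ x, u x * v x ∂μ)
          - hvv * ((∫ x, ustar x ∂μ) - (∫ x, u x ∂μ)) := by
    intro u hu
    have iu : Integrable u μ := hu.integrable one_le_two
    have iw : Integrable ustar μ := hwmem.integrable one_le_two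
    have iuv : Integrable (fun x => u x * v x) μ := hmul u hu
    have iwv : Integrable (fun x => ustar x * v x) μ := hmul ustar hwmem
    have i1 : Integrable (fun x => ustar x * v x - u x * v x) μ := iwv.sub iuv
    have i2 : Integrable (fun x => hvv * ustar x - hvv * u x) μ :=
      (iw.const_mul hvv).sub (iu.const_mul hvv)
    have heq : (fun x => (ustar x - u x) * (v x - hvv)) =
        fun x => (ustar x * v x - u x * v x) - (hvv * ustar x - hvv * u x) := by
      funext x; ring
    rw [heq, integral_sub i1 i2, integral_sub iwv iuv,
      integral_sub (iw.const_mul hvv) (iu.const_mul hvv),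
      integral_const_mul, integral_const_mul]
    ring
  -- pointwise nonnegativity
  have hpt : ∀ u : (Fin d → ℝ) → ℝ, (∀ᵐ x ∂μ, 0 ≤ u x ∧ u x ≤ 1) →
      ∀ᵐ x ∂μ, 0 ≤ (ustar x - u x) * (v x - hvv) := by
    intro u hu01
    refine hu01.mono fun x hx => ?_
    obtain ⟨h0, h1⟩ := hx
    rw [hustar]
    by_cases h : x ∈ S
    · rw [Set.indicator_of_mem h]
      have : hvv < v x := h
      exact mul_nonneg (by linarith) (by linarith)
    · rw [Set.indicator_of_notMem h]
      have : ¬ hvv < v x := h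
      push_neg at this
      nlinarith
  -- second term nonneg
  have hterm2 : ∀ u : (Fin d → ℝ) → ℝ, (∫ x, u x ∂μ) ≤ A →
      0 ≤ hvv * ((∫ x, ustar x ∂μ) - (∫ x, u x ∂μ)) := by
    intro u hule
    rcases eq_or_lt_of_le hvv0 with h | h
    · rw [← h, zero_mul]
    · refine mul_nonneg h.le ?_
      have := key2 h
      rw [hwint]
      linarith
  -- main maximality
  have hmain : ∀ u : (Fin d → ℝ) → ℝ, MemLp u 2 μ →
      (∀ᵐ x ∂μ, 0 ≤ u x ∧ u x ≤ 1) → (∫ x, u x ∂μ) ≤ A →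
      (∫ x, u x * v x ∂μ) ≤ ∫ x, ustar x * v x ∂μ := by
    intro u hu hu01 hule
    have hJ : 0 ≤ ∫ x, (ustar x - u x) * (v x - hvv) ∂μ :=
      integral_nonneg_of_ae (hpt u hu01)
    have h1 := hdec u hu
    have h2 := hterm2 u hule
    linarith
  refine ⟨⟨hwmem, hw01, by rw [hwint]; exact key1⟩, hmain, ?_, ?_⟩
  · -- uniqueness
    intro u hu hu01 hule heq
    have hJ : 0 ≤ ∫ x, (ustar x - u x) * (v x - hvv) ∂μ :=
      integral_nonneg_of_ae (hpt u hu01)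
    have h1 := hdec u hu
    have h2 := hterm2 u hule
    have hJ0 : (∫ x, (ustar x - u x) * (v x - hvv) ∂μ) = 0 := by linarith
    have iint : Integrable (fun x => (ustar x - u x) * (v x - hvv)) μ := by
      have iu : Integrable u μ := hu.integrable one_le_two
      have iw : Integrable ustar μ := hwmem.integrable one_le_two
      have iuv : Integrable (fun x => u x * v x) μ := hmul u hu
      have iwv : Integrable (fun x => ustar x * v x) μ := hmul ustar hwmem
      have heq2 : (fun x => (ustar x - u x) * (v x - hvv)) =
          fun x => (ustar x * v x - u x * v x) - (hvv * ustar x - hvv * u x) := by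
        funext x; ring
      rw [heq2]
      exact (iwv.sub iuv).sub ((iw.const_mul hvv).sub (iu.const_mul hvv))
    have hz := (integral_eq_zero_iff_of_nonneg_ae (hpt u hu01) iint).1 hJ0
    have hne : ∀ᵐ x ∂μ, v x ≠ hvv := by
      rw [ae_iff]
      convert hlevel hvv using 2
      simp [not_not]
    filter_upwards [hz, hne] with x hx0 hxne
    have hx0' : (ustar x - u x) * (v x - hvv) = 0 := hx0
    rcases mul_eq_zero.1 hx0' with h | h
    · linarith [sub_eq_zero.1 h]
    · have hveq : v x = hvv := by
        have := sub_eq_zero.1 h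
        linarith
      exact absurd hveq hxne
  · -- value of the maximum
    have h1 : (fun x => ustar x * v x) =ᵐ[μ] Set.indicator T v := by
      refine hwiT.mono fun x hx => ?_
      show ustar x * v x = Set.indicator T v x
      by_cases h : x ∈ T
      · rw [hx, Set.indicator_of_mem h, Set.indicator_of_mem h, one_mul]
      · rw [hx, Set.indicator_of_notMem h, Set.indicator_of_notMem h, zero_mul]
    rw [integral_congr_ae h1, integral_indicator (hTm hvv),
      Measure.restrict_congr_set hST]
end

section
/- Coercivity of the dual functional: Let z ∈ L²(Ω) with z ≥ 0 a.e. and ε > 0, and define J(q) := Φ(Bq) − ⟨z, q⟩_{L²(Ω)} + ε·‖q‖_{L²(Ω)} for q ∈ L²(Ω). Then liminf_{‖q‖_{L²(Ω)} → ∞} J(q)/‖q‖_{L²(Ω)} ≥ ε. In particular J(q) → +∞ as ‖q‖_{L²(Ω)} → ∞, and J attains its minimum on L²(Ω). -/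
open MeasureTheory

lemma exists_isMinOn_aux {H : Type*} [NormedAddCommGroup H] [InnerProductSpace ℝ H]
    [CompleteSpace H] {S : Set H} (hSne : S.Nonempty) (hScl : IsClosed S)
    (hScv : Convex ℝ S) (hSbd : Bornology.IsBounded S) (f : H → ℝ)
    (hfc : ConvexOn ℝ Set.univ f) (hflsc : LowerSemicontinuous f)
    (hbd : BddBelow (f '' S)) :
    ∃ v ∈ S, ∀ w ∈ S, f v ≤ f w := by
  set m : ℝ := sInf (f '' S) with hm
  set C : ℕ → Set H := fun n => {v ∈ S | f v ≤ m + 1 / (n + 1)} with hC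
  have hCne : ∀ n, (C n).Nonempty := by
    intro n
    have hlt : m < m + 1 / (n + 1) := by
      have : (0:ℝ) < 1 / (n + 1) := by positivity
      linarith
    obtain ⟨a, ⟨w, hw, rfl⟩, ha⟩ := exists_lt_of_csInf_lt (hSne.image f) hlt
    exact ⟨w, hw, ha.le⟩
  have hCcl : ∀ n, IsClosed (C n) := by
    intro n
    exact hScl.inter (hflsc.isClosed_preimage _)
  have hCcv : ∀ n, Convex ℝ (C n) := by
    intro n
    have := hfc.convex_le (m + 1 / (n + 1))
    have h2 : C n = S ∩ {x ∈ Set.univ | f x ≤ m + 1 / (n + 1)} := by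
      ext x; simp [hC]
    rw [h2]; exact hScv.inter this
  have hCmono : ∀ {k n : ℕ}, k ≤ n → C n ⊆ C k := by
    intro k n hkn x hx
    refine ⟨hx.1, hx.2.trans ?_⟩
    have : (1 : ℝ) / (n + 1) ≤ 1 / (k + 1) := by
      apply one_div_le_one_div_of_le (by positivity)
      have : (k:ℝ) ≤ (n:ℝ) := by exact_mod_cast hkn
      linarith
    linarith
  -- projections of 0 onto C n
  have hproj : ∀ n, ∃ v ∈ C n, ‖(0 : H) - v‖ = ⨅ w : C n, ‖(0 : H) - w‖ := fun n =>
    exists_norm_eq_iInf_of_complete_convex (hCne n) ((hCcl n).isComplete) (hCcv n) 0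
  choose p hp hpn using hproj
  set d : ℕ → ℝ := fun n => ‖p n‖ with hd
  have hkey : ∀ n, ∀ w ∈ C n, d n ≤ ‖w‖ := by
    intro n w hw
    have hb : BddBelow (Set.range fun w : C n => ‖(0 : H) - w‖) := by
      refine ⟨0, ?_⟩; rintro x ⟨w, rfl⟩; positivity
    have := ciInf_le hb (⟨w, hw⟩ : C n)
    calc d n = ‖(0:H) - p n‖ := by simp [hd]
    _ ≤ ‖(0:H) - w‖ := by rw [hpn n]; exact this
    _ = ‖w‖ := by simp
  have hmono : Monotone d := by
    intro k n hkn
    exact hkey k (p n) (hCmono hkn (hp n))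
  obtain ⟨D, hD⟩ : ∃ D, ∀ x ∈ S, ‖x‖ ≤ D := hSbd.exists_norm_le
  have hdbd : BddAbove (Set.range d) := by
    refine ⟨D, ?_⟩; rintro x ⟨n, rfl⟩; exact hD _ (hp n).1
  set L : ℝ := ⨆ n, d n with hL
  have htendL : Filter.Tendsto d Filter.atTop (nhds L) := tendsto_atTop_ciSup hmono hdbd
  have hdL : ∀ n, d n ≤ L := fun n => le_ciSup hdbd n
  have hd0 : ∀ n, 0 ≤ d n := fun n => norm_nonneg _
  -- Cauchy
  have hcauchy : CauchySeq p := by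
    rw [Metric.cauchySeq_iff']
    intro ε hε
    have h2 : Filter.Tendsto (fun n => (d n)^2) Filter.atTop (nhds (L^2)) := htendL.pow 2
    have : ∀ᶠ N in Filter.atTop, L^2 - (d N)^2 < ε^2/2 := by
      have := h2.eventually (eventually_gt_nhds (show L^2 - ε^2/2 < L^2 by nlinarith))
      filter_upwards [this] with N hN; linarith
    obtain ⟨N, hN⟩ := this.exists
    refine ⟨N, fun n hn => ?_⟩
    have hmid : (1/2 : ℝ) • p n + (1/2 : ℝ) • p N ∈ C N :=
      hCcv N (hCmono hn (hp n)) (hp N) (by norm_num) (by norm_num) (by norm_num)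
    have hmn : d N ≤ ‖(1/2 : ℝ) • p n + (1/2 : ℝ) • p N‖ := hkey N _ hmid
    have hpar := parallelogram_law_with_norm ℝ (p n) (p N)
    have hsum : ‖p n + p N‖ = 2 * ‖(1/2 : ℝ) • p n + (1/2 : ℝ) • p N‖ := by
      rw [← smul_add, norm_smul, Real.norm_eq_abs, abs_of_pos (by norm_num : (0:ℝ) < 1/2)]
      ring
    have h1 : ‖p n - p N‖ * ‖p n - p N‖ ≤ 2 * ((d n)^2 - (d N)^2) := by
      have hdn : ‖p n‖ = d n := rfl
      have hdN : ‖p N‖ = d N := rfl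
      nlinarith [norm_nonneg ((1/2 : ℝ) • p n + (1/2 : ℝ) • p N), hd0 N]
    have h3 : ‖p n - p N‖ * ‖p n - p N‖ < ε^2 := by
      have := hdL n
      nlinarith [hd0 n, hd0 N]
    rw [dist_eq_norm]
    nlinarith [norm_nonneg (p n - p N)]
  obtain ⟨v, hv⟩ := cauchySeq_tendsto_of_complete hcauchy
  have hvC : ∀ k, v ∈ C k := by
    intro k
    refine (hCcl k).mem_of_tendsto hv ?_
    filter_upwards [Filter.eventually_ge_atTop k] with n hn
    exact hCmono hn (hp n)
  have hvS : v ∈ S := (hvC 0).1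
  have hfv : f v ≤ m := by
    by_contra hcon
    push_neg at hcon
    obtain ⟨k, hk⟩ := exists_nat_one_div_lt (show 0 < f v - m by linarith)
    have := (hvC k).2
    linarith
  exact ⟨v, hvS, fun w hw => hfv.trans (csInf_le hbd ⟨w, hw, rfl⟩)⟩

open scoped ENNReal

set_option maxHeartbeats 1000000 in
/-- Coercivity of the dual functional: if `Φ` is convex, lsc, nonnegative,
positively 2-homogeneous, and `Φ(Bq) = 0` implies `q ≤ 0` a.e., then for
`J(q) = Φ(Bq) - ⟨z,q⟩ + ε‖q‖` with `z ≥ 0` a.e. and `ε > 0`, we have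
`liminf_{‖q‖→∞} J(q)/‖q‖ ≥ ε`; in particular `J(q) → +∞` as `‖q‖ → ∞`, and `J`
attains its minimum on `L²(Ω)`. -/
theorem dual_functional_coercive
    (d : ℕ) (hd : 1 ≤ d)
    (Ω : Set (Fin d → ℝ)) (hΩne : Ω.Nonempty) (hΩop : IsOpen Ω)
    (hΩbd : Bornology.IsBounded Ω)
    (μ : Measure (Fin d → ℝ)) (hμ : μ = volume.restrict Ω)
    (E : Type*) [NormedAddCommGroup E] [InnerProductSpace ℝ E] [CompleteSpace E]
    (B : Lp ℝ 2 μ →L[ℝ] E)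
    (Φ : E → ℝ)
    (hΦconv : ConvexOn ℝ Set.univ Φ)
    (hΦlsc : LowerSemicontinuous Φ)
    (hΦnonneg : ∀ x : E, 0 ≤ Φ x)
    (hΦhom : ∀ l : ℝ, 0 < l → ∀ x : E, Φ (l • x) = l ^ 2 * Φ x)
    (hUC : ∀ q : Lp ℝ 2 μ, Φ (B q) = 0 → ∀ᵐ x ∂μ, q x ≤ 0)
    (z : Lp ℝ 2 μ) (hz : ∀ᵐ x ∂μ, 0 ≤ z x)
    (ε : ℝ) (hε : 0 < ε)
    (J : Lp ℝ 2 μ → ℝ)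
    (hJ : ∀ q : Lp ℝ 2 μ, J q = Φ (B q) - (inner ℝ z q : ℝ) + ε * ‖q‖) :
    (∀ c : ℝ, c < ε → ∃ R : ℝ, ∀ q : Lp ℝ 2 μ, R ≤ ‖q‖ → c ≤ J q / ‖q‖) ∧
    (∀ M : ℝ, ∃ R : ℝ, ∀ q : Lp ℝ 2 μ, R ≤ ‖q‖ → M ≤ J q) ∧
    (∃ qmin : Lp ℝ 2 μ, ∀ q : Lp ℝ 2 μ, J qmin ≤ J q) := by
  set f : Lp ℝ 2 μ → ℝ := fun q => Φ (B q) with hf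
  have hfnonneg : ∀ q, 0 ≤ f q := fun q => hΦnonneg _
  have hfconv : ConvexOn ℝ Set.univ f := by
    have := hΦconv.comp_linearMap (B : Lp ℝ 2 μ →ₗ[ℝ] E)
    exact this
  have hflsc : LowerSemicontinuous f := by
    rw [lowerSemicontinuous_iff_isClosed_preimage]
    intro y
    exact (hΦlsc.isClosed_preimage y).preimage B.continuous
  have hscale : ∀ l : ℝ, 0 < l → ∀ q : Lp ℝ 2 μ, f (l • q) = l ^ 2 * f q := by
    intro l hl q
    show Φ (B (l • q)) = l ^ 2 * Φ (B q)
    rw [B.map_smul]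
    exact hΦhom l hl _
  have hinner_nonpos : ∀ q : Lp ℝ 2 μ, (∀ᵐ x ∂μ, q x ≤ 0) → (inner ℝ z q : ℝ) ≤ 0 := by
    intro q hq
    rw [L2.inner_def]
    apply integral_nonpos_of_ae
    filter_upwards [hz, hq] with x hzx hqx
    simpa [RCLike.inner_apply] using mul_nonpos_of_nonpos_of_nonneg hqx hzx
  -- key positivity lemma
  have keyB : ∀ δ : ℝ, 0 < δ → ∃ m : ℝ, 0 < m ∧
      ∀ v : Lp ℝ 2 μ, ‖v‖ ≤ 1 → δ ≤ (inner ℝ z v : ℝ) → m ≤ f v := by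
    intro δ hδ
    set S : Set (Lp ℝ 2 μ) :=
      Metric.closedBall 0 1 ∩ (innerSL ℝ z : Lp ℝ 2 μ →L[ℝ] ℝ) ⁻¹' Set.Ici δ with hS
    have hmemS : ∀ v : Lp ℝ 2 μ, v ∈ S ↔ ‖v‖ ≤ 1 ∧ δ ≤ (inner ℝ z v : ℝ) := by
      intro v
      simp [hS, Metric.mem_closedBall, dist_zero_right, innerSL_apply_apply]
    by_cases hne : S.Nonempty
    · have hScl : IsClosed S :=
        Metric.isClosed_closedBall.inter (isClosed_Ici.preimage (innerSL ℝ z).continuous)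
      have hScv : Convex ℝ S :=
        (convex_closedBall _ _).inter
          ((convex_Ici δ).linear_preimage ((innerSL ℝ z) : Lp ℝ 2 μ →ₗ[ℝ] ℝ))
      have hSbd : Bornology.IsBounded S :=
        Metric.isBounded_closedBall.subset Set.inter_subset_left
      obtain ⟨v₀, hv₀S, hv₀min⟩ := exists_isMinOn_aux hne hScl hScv hSbd f hfconv hflsc
        ⟨0, by rintro x ⟨w, _, rfl⟩; exact hfnonneg w⟩
      refine ⟨f v₀, ?_, fun v h1 h2 => hv₀min v ((hmemS v).mpr ⟨h1, h2⟩)⟩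
      rcases lt_or_eq_of_le (hfnonneg v₀) with h | h
      · exact h
      · exfalso
        have hae := hUC v₀ h.symm
        have := hinner_nonpos v₀ hae
        have hδle := ((hmemS v₀).mp hv₀S).2
        linarith
    · exact ⟨1, one_pos, fun v h1 h2 => absurd ((hmemS v).mpr ⟨h1, h2⟩) (fun hm => hne ⟨v, hm⟩)⟩
  have part1 : ∀ c : ℝ, c < ε → ∃ R : ℝ, ∀ q : Lp ℝ 2 μ, R ≤ ‖q‖ → c ≤ J q / ‖q‖ := by
    intro c hc
    obtain ⟨m, hm, hkey⟩ := keyB (ε - c) (by linarith)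
    refine ⟨max 1 (‖z‖ / m), fun q hq => ?_⟩
    have hq1 : (1 : ℝ) ≤ ‖q‖ := le_trans (le_max_left _ _) hq
    have hqz : ‖z‖ / m ≤ ‖q‖ := le_trans (le_max_right _ _) hq
    have hqpos : (0 : ℝ) < ‖q‖ := by linarith
    set n : ℝ := ‖q‖ with hn
    set v : Lp ℝ 2 μ := n⁻¹ • q with hv
    have hvq : q = n • v := by
      rw [hv, smul_smul, mul_inv_cancel₀ (ne_of_gt hqpos), one_smul]
    have hnv : ‖v‖ = 1 := by
      rw [hv, norm_smul, Real.norm_eq_abs, abs_of_pos (inv_pos.mpr hqpos), ← hn,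
        inv_mul_cancel₀ (ne_of_gt hqpos)]
    have hfq : f q = n ^ 2 * f v := by rw [hvq]; exact hscale n hqpos v
    have hiq : (inner ℝ z q : ℝ) = n * (inner ℝ z v : ℝ) := by
      rw [hvq]; exact real_inner_smul_right z v n
    have hclaim : c - ε ≤ n * f v - (inner ℝ z v : ℝ) := by
      by_cases hcase : (inner ℝ z v : ℝ) ≤ ε - c
      · nlinarith [hfnonneg v]
      · push_neg at hcase
        have hfv : m ≤ f v := hkey v hnv.le hcase.le
        have hzn : (inner ℝ z v : ℝ) ≤ ‖z‖ := by
          have := real_inner_le_norm z v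
          rw [hnv] at this; linarith
        have : ‖z‖ ≤ n * m := by
          rw [div_le_iff₀ hm] at hqz; linarith [hqz]
        nlinarith
    rw [le_div_iff₀ hqpos, hJ q]
    have h5 : Φ (B q) = n ^ 2 * Φ (B v) := hfq
    have h6 : (inner ℝ z q : ℝ) = n * (inner ℝ z v : ℝ) := hiq
    have h7 : Φ (B v) = f v := rfl
    rw [h5, h6, ← hn, h7]
    nlinarith [mul_le_mul_of_nonneg_left hclaim hqpos.le]
  have part2 : ∀ M : ℝ, ∃ R : ℝ, ∀ q : Lp ℝ 2 μ, R ≤ ‖q‖ → M ≤ J q := by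
    intro M
    obtain ⟨R₁, hR₁⟩ := part1 (ε / 2) (by linarith)
    refine ⟨max (max R₁ 1) (2 * M / ε + 1), fun q hq => ?_⟩
    have h1 : R₁ ≤ ‖q‖ := le_trans (le_trans (le_max_left _ _) (le_max_left _ _)) hq
    have h2 : (1 : ℝ) ≤ ‖q‖ := le_trans (le_trans (le_max_right _ _) (le_max_left _ _)) hq
    have h3 : 2 * M / ε + 1 ≤ ‖q‖ := le_trans (le_max_right _ _) hq
    have hqpos : (0 : ℝ) < ‖q‖ := by linarith
    have hdiv := hR₁ q h1
    rw [le_div_iff₀ hqpos] at hdiv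
    have heq : ε / 2 * (2 * M / ε + 1) = M + ε / 2 := by
      field_simp
    nlinarith [mul_le_mul_of_nonneg_left h3 (le_of_lt (half_pos hε))]
  refine ⟨part1, part2, ?_⟩
  · -- part 3 : existence of a minimizer
    have hJconv : ConvexOn ℝ Set.univ J := by
      refine ⟨convex_univ, fun x _ y _ a b ha hb hab => ?_⟩
      have h1 := hfconv.2 (Set.mem_univ x) (Set.mem_univ y) ha hb hab
      simp only [smul_eq_mul] at h1
      have h2 : ‖a • x + b • y‖ ≤ a * ‖x‖ + b * ‖y‖ := by
        calc ‖a • x + b • y‖ ≤ ‖a • x‖ + ‖b • y‖ := norm_add_le _ _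
        _ = a * ‖x‖ + b * ‖y‖ := by
            rw [norm_smul, norm_smul, Real.norm_eq_abs, Real.norm_eq_abs,
              abs_of_nonneg ha, abs_of_nonneg hb]
      have h3 : (inner ℝ z (a • x + b • y) : ℝ) = a * (inner ℝ z x : ℝ) + b * (inner ℝ z y : ℝ) := by
        rw [inner_add_right, real_inner_smul_right, real_inner_smul_right]
      have h4 : ε * ‖a • x + b • y‖ ≤ ε * (a * ‖x‖ + b * ‖y‖) :=
        mul_le_mul_of_nonneg_left h2 hε.le
      rw [hJ, hJ, hJ]
      simp only [smul_eq_mul]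
      have h1'' : Φ (B (a • x + b • y)) ≤ a * Φ (B x) + b * Φ (B y) := h1
      nlinarith [h1'', h3, h4]
    have hJlsc : LowerSemicontinuous J := by
      have hcont : Continuous fun q : Lp ℝ 2 μ => ε * ‖q‖ - (inner ℝ z q : ℝ) :=
        (continuous_const.mul continuous_norm).sub (innerSL ℝ z).continuous
      have : J = fun q => f q + (ε * ‖q‖ - (inner ℝ z q : ℝ)) := by
        funext q; rw [hJ q]; ring
      rw [this]
      exact hflsc.add hcont.lowerSemicontinuous
    obtain ⟨R, hR⟩ := part2 (J 0 + 1)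
    set R' : ℝ := max R 0 with hR'
    have h0S : (0 : Lp ℝ 2 μ) ∈ Metric.closedBall (0 : Lp ℝ 2 μ) R' :=
      Metric.mem_closedBall_self (le_max_right _ _)
    have hbdd : BddBelow (J '' Metric.closedBall (0 : Lp ℝ 2 μ) R') := by
      refine ⟨-(‖z‖ * R'), ?_⟩
      rintro x ⟨q, hqS, rfl⟩
      have hq : ‖q‖ ≤ R' := by
        rw [Metric.mem_closedBall, dist_zero_right] at hqS; exact hqS
      have hiz : (inner ℝ z q : ℝ) ≤ ‖z‖ * ‖q‖ := real_inner_le_norm z q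
      have hzz : ‖z‖ * ‖q‖ ≤ ‖z‖ * R' := mul_le_mul_of_nonneg_left hq (norm_nonneg z)
      have hεq : 0 ≤ ε * ‖q‖ := mul_nonneg hε.le (norm_nonneg q)
      rw [hJ q]
      have := hΦnonneg (B q)
      linarith
    obtain ⟨qmin, hqminS, hqminmin⟩ := exists_isMinOn_aux ⟨0, h0S⟩ Metric.isClosed_closedBall
      (convex_closedBall _ _) Metric.isBounded_closedBall J hJconv hJlsc hbdd
    refine ⟨qmin, fun q => ?_⟩
    by_cases hqS : q ∈ Metric.closedBall (0 : Lp ℝ 2 μ) R'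
    · exact hqminmin q hqS
    · have hq : R' < ‖q‖ := by
        rw [Metric.mem_closedBall, dist_zero_right] at hqS; push_neg at hqS; exact hqS
      have hJq : J 0 + 1 ≤ J q := hR q (le_trans (le_max_left _ _) hq.le)
      have := hqminmin 0 h0S
      linarith
end

section
/- Subdifferential of an integral functional: Let f : H → ℝ be convex and Lipschitz continuous, and define F : L²(0,T;H) → ℝ by F(u) := ∫_0^T f(u(t)) dt. Then for every u ∈ L²(0,T;H), ∂F(u) = {p ∈ L²(0,T;H) : p(t) ∈ ∂f(u(t)) for a.e. t ∈ (0,T)}. -/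
open MeasureTheory
open scoped ENNReal NNReal

lemma integrable_comp_lipschitz' {H : Type*} [NormedAddCommGroup H]
    {α : Type*} [MeasurableSpace α] {μ : Measure α}
    [IsFiniteMeasure μ] {f : H → ℝ} {K : ℝ≥0} (hlip : LipschitzWith K f)
    {v : α → H} (hv : MemLp v 2 μ) : Integrable (fun t => f (v t)) μ := by
  have hv1 : Integrable v μ :=
    memLp_one_iff_integrable.1 (hv.mono_exponent (by norm_num))
  refine Integrable.mono' (((hv1.norm.const_mul (K : ℝ))).add (integrable_const |f 0|)) ?_ ?_
  · exact hlip.continuous.comp_aestronglyMeasurable hv.aestronglyMeasurable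
  · refine Filter.Eventually.of_forall fun t => ?_
    have h1 : dist (f (v t)) (f 0) ≤ (K : ℝ) * dist (v t) 0 := hlip.dist_le_mul _ _
    rw [Real.dist_eq, dist_zero_right] at h1
    have h2 : |f (v t)| ≤ |f (v t) - f 0| + |f 0| := by
      calc |f (v t)| = |(f (v t) - f 0) + f 0| := by ring_nf
        _ ≤ |f (v t) - f 0| + |f 0| := abs_add_le _ _
    simpa [Real.norm_eq_abs] using h2.trans (by linarith)

/-- Subdifferential of an integral functional: for `f : H → ℝ` convex and
Lipschitz and `F(u) = ∫_0^T f(u(t)) dt` on `L²(0,T;H)`, one has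
`∂F(u) = {p ∈ L²(0,T;H) : p(t) ∈ ∂f(u(t)) for a.e. t}`. -/
theorem subdifferential_of_integral_functional
    {H : Type*} [NormedAddCommGroup H] [InnerProductSpace ℝ H] [CompleteSpace H]
    (T : ℝ) (hT : 0 < T)
    (ν : Measure ℝ) (hν : ν = volume.restrict (Set.Ioo 0 T))
    (f : H → ℝ)
    (hconv : ConvexOn ℝ Set.univ f)
    (K : ℝ≥0) (hlip : LipschitzWith K f)
    (F : Lp H 2 ν → ℝ)
    (hF : ∀ u : Lp H 2 ν, F u = ∫ t, f (u t) ∂ν) :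
    ∀ u : Lp H 2 ν,
      {p : Lp H 2 ν | ∀ w : Lp H 2 ν, F u + (inner ℝ p (w - u) : ℝ) ≤ F w}
        = {p : Lp H 2 ν |
            ∀ᵐ t ∂ν, ∀ y : H, f (u t) + (inner ℝ (p t) (y - u t) : ℝ) ≤ f y} := by
  haveI : IsFiniteMeasure ν := by subst hν; exact ⟨by simp [Real.volume_Ioo]⟩
  intro u
  have hfu_int : Integrable (fun t => f (u t)) ν := integrable_comp_lipschitz' hlip (Lp.memLp u)
  ext p
  simp only [Set.mem_setOf_eq]
  constructor
  · -- hard direction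
    intro hp
    obtain ⟨p', hp'm, hp'e⟩ := (Lp.aestronglyMeasurable p)
    obtain ⟨u', hu'm, hu'e⟩ := (Lp.aestronglyMeasurable u)
    obtain ⟨D, hDc, hDsub⟩ := hp'm.isSeparable_range
    set β : ℝ → ℝ := fun t => (inner ℝ (p' t) (u' t) : ℝ) - f (u' t) with hβ_def
    have hβm : Measurable β := by
      have h1 : StronglyMeasurable fun t => (inner ℝ (p' t) (u' t) : ℝ) := hp'm.inner hu'm
      have h2 : StronglyMeasurable fun t => f (u' t) :=
        hlip.continuous.comp_stronglyMeasurable hu'm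
      exact (h1.sub h2).measurable
    -- the bad sets
    set S : H → ℚ → ℕ → ℚ → Set ℝ := fun q m j r =>
      {t | ‖p' t - q‖ < (r : ℝ) ∧ β t ≤ (m : ℝ) - (r : ℝ) * (j : ℝ) - (r : ℝ)} with hS_def
    have hSmeas : ∀ q m j r, MeasurableSet (S q m j r) := by
      intro q m j r
      refine MeasurableSet.inter ?_ ?_
      · exact measurableSet_lt ((hp'm.sub stronglyMeasurable_const).norm).measurable
          measurable_const
      · exact measurableSet_le hβm measurable_const
    have hu'2 : MemLp u' 2 ν := (Lp.memLp u).ae_eq hu'e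
    -- the key null lemma
    have hnull : ∀ (q : H) (m : ℚ) (j : ℕ) (r : ℚ), 0 < r →
        ∀ y : H, ‖y‖ ≤ (j : ℝ) → (m : ℝ) < (inner ℝ q y : ℝ) - f y → ν (S q m j r) = 0 := by
      intro q m j r hr y hyj hqy
      have hr0 : (0 : ℝ) < (r : ℝ) := by exact_mod_cast hr
      set A := S q m j r with hA_def
      have hA : MeasurableSet A := hSmeas q m j r
      classical
      set w : ℝ → H := fun t => if t ∈ A then y else u' t with hw_def
      have hwm : StronglyMeasurable w := StronglyMeasurable.ite hA stronglyMeasurable_const hu'm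
      have hw2 : MemLp w 2 ν := by
        refine MemLp.mono (f := w) (g := fun t => ‖y‖ + ‖u' t‖)
          ((memLp_const ‖y‖).add hu'2.norm) hwm.aestronglyMeasurable ?_
        refine Filter.Eventually.of_forall fun t => ?_
        have hb : (0:ℝ) ≤ ‖y‖ + ‖u' t‖ := by positivity
        rw [Real.norm_eq_abs, abs_of_nonneg hb]
        by_cases h : t ∈ A
        · simp only [hw_def, if_pos h]; linarith [norm_nonneg (u' t)]
        · simp only [hw_def, if_neg h]; linarith [norm_nonneg y]
      set W : Lp H 2 ν := MemLp.toLp w hw2 with hW_def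
      have hWe : (W : ℝ → H) =ᶠ[ae ν] w := hw2.coeFn_toLp
      have hkey := hp W
      rw [hF u, hF W, L2.inner_def] at hkey
      have hfW_int : Integrable (fun t => f (W t)) ν :=
        integrable_comp_lipschitz' hlip (Lp.memLp W)
      have hinner_int : Integrable (fun t => (inner ℝ (p t) ((W - u) t) : ℝ)) ν :=
        L2.integrable_inner (𝕜 := ℝ) p (W - u)
      set G : ℝ → ℝ := fun t => (inner ℝ (p' t) (w t - u' t) : ℝ) - (f (w t) - f (u' t))
        with hG_def
      have hGe : (fun t => (inner ℝ (p t) ((W - u) t) : ℝ) - (f (W t) - f (u t)))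
          =ᶠ[ae ν] G := by
        filter_upwards [hp'e, hu'e, hWe, Lp.coeFn_sub W u] with t h1 h2 h3 h4
        simp only [hG_def]
        rw [h4, Pi.sub_apply, h1, h2, h3]
      have hG_int : Integrable G ν := (hinner_int.sub (hfW_int.sub hfu_int)).congr hGe
      have hint_le : ∫ t, G t ∂ν ≤ 0 := by
        have e1 : ∫ t, ((inner ℝ (p t) ((W - u) t) : ℝ) - (f (W t) - f (u t))) ∂ν
            = (∫ t, (inner ℝ (p t) ((W - u) t) : ℝ) ∂ν) - ∫ t, (f (W t) - f (u t)) ∂ν :=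
          integral_sub hinner_int (hfW_int.sub hfu_int)
        have e2 : ∫ t, (f (W t) - f (u t)) ∂ν
            = (∫ t, f (W t) ∂ν) - ∫ t, f (u t) ∂ν := integral_sub hfW_int hfu_int
        rw [← integral_congr_ae hGe, e1, e2]
        linarith
      have hpt : ∀ t, A.indicator (fun _ => (r : ℝ)) t ≤ G t := by
        intro t
        by_cases h : t ∈ A
        · rw [Set.indicator_of_mem h]
          have h1 : ‖p' t - q‖ < (r : ℝ) := h.1
          have h2 : β t ≤ (m : ℝ) - (r : ℝ) * (j : ℝ) - (r : ℝ) := h.2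
          have hin : |(inner ℝ (p' t - q) y : ℝ)| ≤ ‖p' t - q‖ * ‖y‖ := abs_real_inner_le_norm _ _
          have hmul : ‖p' t - q‖ * ‖y‖ ≤ (r : ℝ) * (j : ℝ) :=
            mul_le_mul h1.le hyj (norm_nonneg y) hr0.le
          have hsplit : (inner ℝ (p' t - q) y : ℝ) = inner ℝ (p' t) y - inner ℝ q y :=
            inner_sub_left _ _ _
          have hGt : G t = ((inner ℝ (p' t) y : ℝ) - f y) - β t := by
            simp only [hG_def, hw_def, if_pos h, hβ_def, inner_sub_right]
            ring
          rw [hGt]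
          have habs := abs_le.1 hin
          rw [hsplit] at habs
          linarith [habs.1, habs.2]
        · rw [Set.indicator_of_notMem h]
          have hGt : G t = 0 := by
            simp [hG_def, hw_def, if_neg h]
          rw [hGt]
      have hind_int : Integrable (A.indicator fun _ => (r : ℝ)) ν :=
        (integrable_const _).indicator hA
      have hlow : (ν A).toReal * (r : ℝ) ≤ ∫ t, G t ∂ν := by
        have := integral_mono hind_int hG_int hpt
        rwa [integral_indicator_const (r : ℝ) hA, smul_eq_mul] at this
      have htoReal : (ν A).toReal = 0 := by
        nlinarith [ENNReal.toReal_nonneg (a := ν A)]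
      rcases (ENNReal.toReal_eq_zero_iff _).1 htoReal with h | h
      · exact h
      · exact absurd h (measure_ne_top ν A)
    -- combine the countably many null sets
    have hae : ∀ᵐ t ∂ν, ∀ q ∈ D, ∀ (m : ℚ) (j : ℕ) (r : ℚ),
        (0 < r ∧ ∃ y : H, ‖y‖ ≤ (j : ℝ) ∧ (m : ℝ) < (inner ℝ q y : ℝ) - f y) →
          t ∉ S q m j r := by
      rw [ae_ball_iff hDc]
      intro q hq
      rw [ae_all_iff]; intro m
      rw [ae_all_iff]; intro j
      rw [ae_all_iff]; intro r
      by_cases hc : 0 < r ∧ ∃ y : H, ‖y‖ ≤ (j : ℝ) ∧ (m : ℝ) < (inner ℝ q y : ℝ) - f y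
      · obtain ⟨hr, y, hy1, hy2⟩ := hc
        filter_upwards [measure_eq_zero_iff_ae_notMem.1 (hnull q m j r hr y hy1 hy2)] with t ht
        exact fun _ => ht
      · exact Filter.Eventually.of_forall fun t hco => absurd hco hc
    filter_upwards [hae, hp'e, hu'e] with t ht h1 h2
    intro y
    rw [h1, h2]
    by_contra hcon
    push_neg at hcon
    set θ : ℝ := (inner ℝ (p' t) y : ℝ) - f y - β t with hθ_def
    have hθ : 0 < θ := by
      have : (inner ℝ (p' t) (y - u' t) : ℝ) = inner ℝ (p' t) y - inner ℝ (p' t) (u' t) :=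
        inner_sub_right _ _ _
      simp only [hθ_def, hβ_def]
      linarith [hcon, this ▸ hcon]
    set j : ℕ := ⌈‖y‖⌉₊ with hj_def
    have hyj : ‖y‖ ≤ (j : ℝ) := Nat.le_ceil _
    have hj0 : (0 : ℝ) ≤ (j : ℝ) := Nat.cast_nonneg _
    obtain ⟨r, hr0, hr1⟩ := exists_rat_btwn (show (0:ℝ) < θ / (4 * ((j:ℝ) + 1)) by positivity)
    have hrQ : 0 < r := by exact_mod_cast hr0
    have hr4 : (r : ℝ) * (4 * ((j:ℝ) + 1)) < θ := (lt_div_iff₀ (by positivity)).1 hr1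
    obtain ⟨q, hqD, hqdist⟩ : ∃ q ∈ D, ‖p' t - q‖ < (r : ℝ) := by
      have hmem : p' t ∈ closure D := hDsub (Set.mem_range_self t)
      obtain ⟨q, hqD, hqd⟩ := Metric.mem_closure_iff.1 hmem (r : ℝ) hr0
      exact ⟨q, hqD, by rwa [dist_eq_norm] at hqd⟩
    obtain ⟨m, hm1, hm2⟩ := exists_rat_btwn
      (show β t + (r:ℝ) * ((j:ℝ) + 1) < β t + θ - (r:ℝ) * (j:ℝ) by nlinarith)
    have hwit : (m : ℝ) < (inner ℝ q y : ℝ) - f y := by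
      have hin : |(inner ℝ (p' t - q) y : ℝ)| ≤ ‖p' t - q‖ * ‖y‖ := abs_real_inner_le_norm _ _
      have hmul : ‖p' t - q‖ * ‖y‖ ≤ (r : ℝ) * (j : ℝ) :=
        mul_le_mul hqdist.le hyj (norm_nonneg y) hr0.le
      have hsplit : (inner ℝ (p' t - q) y : ℝ) = inner ℝ (p' t) y - inner ℝ q y :=
        inner_sub_left _ _ _
      have habs := abs_le.1 hin
      rw [hsplit] at habs
      have : (inner ℝ (p' t) y : ℝ) - f y = β t + θ := by simp only [hθ_def]; ring
      linarith [habs.1, habs.2]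
    have hmem : t ∈ S q m j r := by
      refine ⟨hqdist, ?_⟩
      have : (β t : ℝ) + (r:ℝ) * ((j:ℝ) + 1) < m := hm1
      linarith [this]
    exact ht q hqD m j r ⟨hrQ, y, hyj, hwit⟩ hmem
  · -- easy direction
    intro hp w
    rw [hF u, hF w, L2.inner_def]
    have hfw_int : Integrable (fun t => f (w t)) ν := integrable_comp_lipschitz' hlip (Lp.memLp w)
    have hinner_int : Integrable (fun t => (inner ℝ (p t) ((w - u) t) : ℝ)) ν :=
      L2.integrable_inner (𝕜 := ℝ) p (w - u)
    rw [← integral_add hfu_int hinner_int]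
    refine integral_mono_ae (hfu_int.add hinner_int) hfw_int ?_
    filter_upwards [hp, Lp.coeFn_sub w u] with t ht hsub
    have : ((w - u) t : H) = w t - u t := by rw [hsub]; rfl
    rw [this]
    exact ht (w t)
end

section
/- Uniqueness criterion for the relaxed bathtub problem: Let v ∈ L²(Ω). (i) If h(v) > 0 and |{v > h(v)}| + |{v = h(v)}| = L|Ω|, then the maximiser of u ↦ ∫_Ω u·v over Ū_L is unique (up to a.e. equality). (ii) If h(v) > 0 and |{v > h(v)}| < L|Ω| < |{v > h(v)}| + |{v = h(v)}|, then there exist at least two maximisers that are not a.e. equal. (iii) If h(v) = 0, |{v = 0}| > 0 and |{v > 0}| < L|Ω|, then there exist at least two maximisers that are not a.e. equal. -/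
open MeasureTheory
open scoped ENNReal

section BathtubAux

variable {α : Type*} [MeasurableSpace α]

variable {α : Type*} [MeasurableSpace α]

lemma bt_bdd_int {μ : Measure α} [IsFiniteMeasure μ] {u : α → ℝ}
    (hm : AEStronglyMeasurable u μ) (hb : ∀ᵐ x ∂μ, 0 ≤ u x ∧ u x ≤ 1) :
    Integrable u μ :=
  (integrable_const (1:ℝ)).mono' hm (hb.mono fun x hx => by
    rw [Real.norm_eq_abs, abs_le]; exact ⟨by linarith [hx.1], hx.2⟩)

lemma bt_mul_int {μ : Measure α} [IsFiniteMeasure μ] {u v : α → ℝ}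
    (hm : AEStronglyMeasurable u μ) (hb : ∀ᵐ x ∂μ, 0 ≤ u x ∧ u x ≤ 1)
    (hv : Integrable v μ) : Integrable (fun x => u x * v x) μ :=
  hv.norm.mono' (hm.mul hv.aestronglyMeasurable) (hb.mono fun x hx => by
    have h1 : |u x| ≤ 1 := abs_le.2 ⟨by linarith [hx.1], hx.2⟩
    rw [Real.norm_eq_abs, abs_mul]
    calc |u x| * |v x| ≤ 1 * |v x| := mul_le_mul_of_nonneg_right h1 (abs_nonneg _)
      _ = ‖v x‖ := by rw [one_mul, Real.norm_eq_abs])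

lemma bt_opt {μ : Measure α} [IsFiniteMeasure μ] (v u : α → ℝ) (h A : ℝ)
    (hh : 0 ≤ h) (hv1 : Integrable v μ) (hum : AEStronglyMeasurable u μ)
    (hub : ∀ᵐ x ∂μ, 0 ≤ u x ∧ u x ≤ 1)
    (hsign : ∀ᵐ x ∂μ, (h < v x → u x = 1) ∧ (v x < h → u x = 0))
    (hslack : h = 0 ∨ (∫ x, u x ∂μ) = A) :
    ∀ w : α → ℝ, MemLp w 2 μ → (∀ᵐ x ∂μ, 0 ≤ w x ∧ w x ≤ 1) →
      (∫ x, w x ∂μ) ≤ A → (∫ x, w x * v x ∂μ) ≤ ∫ x, u x * v x ∂μ := by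
  intro w hw2 hwb hwA
  have hwm : AEStronglyMeasurable w μ := hw2.1
  have hu1 := bt_bdd_int hum hub
  have hw1 := bt_bdd_int hwm hwb
  have huv := bt_mul_int hum hub hv1
  have hwv := bt_mul_int hwm hwb hv1
  have key : 0 ≤ ∫ x, (u x - w x) * (v x - h) ∂μ := by
    apply integral_nonneg_of_ae
    filter_upwards [hub, hwb, hsign] with x hx hwx hs
    simp only [Pi.zero_apply]
    rcases lt_trichotomy (v x) h with hlt | heq | hgt
    · rw [hs.2 hlt]; nlinarith [hwx.1, hwx.2]
    · rw [heq]; nlinarith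
    · rw [hs.1 hgt]; nlinarith [hwx.1, hwx.2]
  have expand : ∫ x, (u x - w x) * (v x - h) ∂μ
      = ((∫ x, u x * v x ∂μ) - (∫ x, w x * v x ∂μ))
        - (h * (∫ x, u x ∂μ) - h * (∫ x, w x ∂μ)) := by
    have heq : (fun x => (u x - w x) * (v x - h))
        = fun x => (u x * v x - w x * v x) - (h * u x - h * w x) := by
      funext x; ring
    have h1 : Integrable (fun x => u x * v x - w x * v x) μ := huv.sub hwv
    have h2 : Integrable (fun x => h * u x - h * w x) μ := (hu1.const_mul h).sub (hw1.const_mul h)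
    rw [heq, integral_sub h1 h2,
      integral_sub huv hwv, integral_sub (hu1.const_mul h) (hw1.const_mul h),
      integral_const_mul, integral_const_mul]
  have hterm : 0 ≤ h * (∫ x, u x ∂μ) - h * (∫ x, w x ∂μ) := by
    rcases hslack with h0 | hint
    · simp [h0]
    · rw [hint]; have := mul_le_mul_of_nonneg_left hwA hh; linarith
  rw [expand] at key
  linarith

lemma bt_unique {μ : Measure α} [IsFiniteMeasure μ] (v g u : α → ℝ) (h A : ℝ)
    (hh : 0 < h) (hvg : v =ᵐ[μ] g) (hgm : Measurable g) (hv1 : Integrable v μ)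
    (hmeas : (μ {x | h < g x}).toReal + (μ {x | g x = h}).toReal = A)
    (hum : AEStronglyMeasurable u μ)
    (hub : ∀ᵐ x ∂μ, 0 ≤ u x ∧ u x ≤ 1)
    (huA : (∫ x, u x ∂μ) ≤ A)
    (hopt : ∀ w : (α) → ℝ, MemLp w 2 μ → (∀ᵐ x ∂μ, 0 ≤ w x ∧ w x ≤ 1) →
      (∫ x, w x ∂μ) ≤ A → (∫ x, w x * v x ∂μ) ≤ ∫ x, u x * v x ∂μ) :
    u =ᵐ[μ] Set.indicator {x | h ≤ g x} (fun _ => (1:ℝ)) := by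
  set ustar := Set.indicator {x | h ≤ g x} (fun _ => (1:ℝ)) with hustar
  have hPm : MeasurableSet {x | h < g x} := measurableSet_lt measurable_const hgm
  have hEm : MeasurableSet {x | g x = h} := hgm (measurableSet_singleton h)
  have hUm : MeasurableSet {x | h ≤ g x} := measurableSet_le measurable_const hgm
  have hsm : AEStronglyMeasurable ustar μ :=
    ((measurable_const.indicator hUm).aestronglyMeasurable)
  have hsb : ∀ᵐ x ∂μ, 0 ≤ ustar x ∧ ustar x ≤ 1 := by
    filter_upwards with x
    by_cases hx : x ∈ {x | h ≤ g x}
    · simp [ustar, Set.indicator_of_mem hx]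
    · simp [ustar, Set.indicator_of_notMem hx]
  have hsplit : {x | h ≤ g x} = {x | h < g x} ∪ {x | g x = h} := by
    ext x
    simp only [Set.mem_setOf_eq, Set.mem_union]
    constructor
    · intro hx; rcases lt_or_eq_of_le hx with h1 | h1
      · exact Or.inl h1
      · exact Or.inr h1.symm
    · rintro (h1 | h1)
      · exact le_of_lt h1
      · exact le_of_eq h1.symm
  have hdisj : Disjoint {x | h < g x} {x | g x = h} := by
    rw [Set.disjoint_left]
    intro x hx1 hx2
    exact absurd (Set.mem_setOf_eq ▸ hx2) (ne_of_gt (Set.mem_setOf_eq ▸ hx1))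
  have hint_star : (∫ x, ustar x ∂μ) = A := by
    rw [hustar, integral_indicator_const (1:ℝ) hUm, smul_eq_mul, mul_one, hsplit, measureReal_def,
      measure_union hdisj hEm,
      ENNReal.toReal_add (measure_ne_top μ _) (measure_ne_top μ _), hmeas]
  have hssign : ∀ᵐ x ∂μ, (h < v x → ustar x = 1) ∧ (v x < h → ustar x = 0) := by
    filter_upwards [hvg] with x hx
    constructor
    · intro hlt
      have hmem : x ∈ {x | h ≤ g x} := le_of_lt (hx ▸ hlt)
      simp [ustar, Set.indicator_of_mem hmem]
    · intro hlt
      have hmem : x ∉ {x | h ≤ g x} := by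
        simp only [Set.mem_setOf_eq, not_le]; rw [← hx]; exact hlt
      simp [ustar, Set.indicator_of_notMem hmem]
  have h1le : (∫ x, u x * v x ∂μ) ≤ ∫ x, ustar x * v x ∂μ := by
    refine bt_opt v ustar h A hh.le hv1 hsm hsb hssign (Or.inr hint_star) u ?_ hub huA
    exact MemLp.of_bound hum 1 (hub.mono fun x hx => by
      rw [Real.norm_eq_abs, abs_le]; exact ⟨by linarith [hx.1], hx.2⟩)
  have hsMem : MemLp ustar 2 μ := MemLp.of_bound hsm 1 (hsb.mono fun x hx => by
    rw [Real.norm_eq_abs, abs_le]; exact ⟨by linarith [hx.1], hx.2⟩)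
  have h2le : (∫ x, ustar x * v x ∂μ) ≤ ∫ x, u x * v x ∂μ :=
    hopt ustar hsMem hsb (le_of_eq hint_star)
  have hEqv : (∫ x, ustar x * v x ∂μ) = ∫ x, u x * v x ∂μ := le_antisymm h2le h1le
  have hu1 := bt_bdd_int hum hub
  have hs1 := bt_bdd_int hsm hsb
  have huv := bt_mul_int hum hub hv1
  have hsv := bt_mul_int hsm hsb hv1
  have heqD : (fun x => (ustar x - u x) * (v x - h))
      = fun x => (ustar x * v x - u x * v x) - (h * ustar x - h * u x) := by
    funext x; ring
  have hD1 : Integrable (fun x => ustar x * v x - u x * v x) μ := hsv.sub huv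
  have hD2 : Integrable (fun x => h * ustar x - h * u x) μ :=
    (hs1.const_mul h).sub (hu1.const_mul h)
  have hDint : Integrable (fun x => (ustar x - u x) * (v x - h)) μ := by
    rw [heqD]; exact hD1.sub hD2
  have hDval : ∫ x, (ustar x - u x) * (v x - h) ∂μ
      = - (h * (A - ∫ x, u x ∂μ)) := by
    rw [heqD, integral_sub hD1 hD2, integral_sub hsv huv,
      integral_sub (hs1.const_mul h) (hu1.const_mul h), integral_const_mul,
      integral_const_mul, hEqv, hint_star]
    ring
  have hDnn : ∀ᵐ x ∂μ, 0 ≤ (ustar x - u x) * (v x - h) := by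
    filter_upwards [hvg, hub] with x hx hxb
    rcases lt_trichotomy (g x) h with hlt | heq | hgt
    · have hus : ustar x = 0 := Set.indicator_of_notMem
        (by simp only [Set.mem_setOf_eq, not_le]; exact hlt) _
      rw [hus, hx]; nlinarith [hxb.1]
    · rw [hx, heq, sub_self, mul_zero]
    · have hus : ustar x = 1 := Set.indicator_of_mem
        (by simp only [Set.mem_setOf_eq]; exact le_of_lt hgt) _
      rw [hus, hx]; nlinarith [hxb.2]
  have hge : 0 ≤ ∫ x, (ustar x - u x) * (v x - h) ∂μ := by
    apply integral_nonneg_of_ae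
    filter_upwards [hDnn] with x hx
    simpa using hx
  have hintu : (∫ x, u x ∂μ) = A := by
    rw [hDval] at hge; nlinarith
  have hDae : (fun x => (ustar x - u x) * (v x - h)) =ᵐ[μ] 0 := by
    refine (integral_eq_zero_iff_of_nonneg_ae ?_ hDint).1 (by rw [hDval, hintu]; ring)
    filter_upwards [hDnn] with x hx
    simpa using hx
  have hkey : ∀ᵐ x ∂μ, 0 ≤ ustar x - u x := by
    filter_upwards [hDae, hvg, hub] with x hD hx hxb
    rcases eq_or_ne (g x) h with heq | hne
    · have hus : ustar x = 1 := Set.indicator_of_mem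
        (by simp only [Set.mem_setOf_eq]; exact le_of_eq heq.symm) _
      rw [hus]; linarith [hxb.2]
    · have hD' : (ustar x - u x) * (v x - h) = 0 := hD
      rcases mul_eq_zero.1 hD' with h1 | h2
      · linarith [h1.le, h1.ge]
      · exfalso; rw [hx] at h2; exact hne (by linarith [sub_eq_zero.1 h2])
  have hsum0 : ∫ x, (ustar x - u x) ∂μ = 0 := by
    rw [integral_sub hs1 hu1, hint_star, hintu, sub_self]
  have hfin : (fun x => ustar x - u x) =ᵐ[μ] 0 :=
    (integral_eq_zero_iff_of_nonneg_ae hkey (hs1.sub hu1)).1 hsum0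
  filter_upwards [hfin] with x hx
  have : ustar x - u x = 0 := hx
  linarith [this]

lemma hyperplane_null (d : ℕ) (i0 : Fin d) (a : ℝ) :
    volume {x : Fin d → ℝ | x i0 = a} = 0 := by
  have hset : {x : Fin d → ℝ | x i0 = a}
      = Set.pi Set.univ (fun i => if i = i0 then {a} else Set.univ) := by
    ext x
    simp only [Set.mem_setOf_eq, Set.mem_pi, Set.mem_univ, forall_true_left]
    constructor
    · intro hx i
      by_cases h : i = i0
      · subst h; simp [hx]
      · simp [h]
    · intro hx
      have := hx i0
      simpa using this
  rw [hset, volume_pi_pi]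
  exact Finset.prod_eq_zero (Finset.mem_univ i0) (by simp)

lemma bt_cand {μ : Measure α} [IsFiniteMeasure μ] {P E : Set α} (hPm : MeasurableSet P)
    (hEm : MeasurableSet E) (hPE : ∀ x, x ∈ P → x ∉ E) (φ : α → ℝ)
    (hφm : Measurable φ) (hφ01 : ∀ x, 0 ≤ φ x ∧ φ x ≤ 1) :
    MemLp (fun x => Set.indicator P (fun _ => (1:ℝ)) x
        + φ x * Set.indicator E (fun _ => (1:ℝ)) x) 2 μ ∧
    (∀ x, 0 ≤ Set.indicator P (fun _ => (1:ℝ)) x + φ x * Set.indicator E (fun _ => (1:ℝ)) x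
        ∧ Set.indicator P (fun _ => (1:ℝ)) x + φ x * Set.indicator E (fun _ => (1:ℝ)) x ≤ 1) ∧
    (∀ x ∈ P, Set.indicator P (fun _ => (1:ℝ)) x + φ x * Set.indicator E (fun _ => (1:ℝ)) x = 1) ∧
    (∀ x, x ∉ P → x ∉ E →
      Set.indicator P (fun _ => (1:ℝ)) x + φ x * Set.indicator E (fun _ => (1:ℝ)) x = 0) ∧
    (∀ x ∈ E, Set.indicator P (fun _ => (1:ℝ)) x + φ x * Set.indicator E (fun _ => (1:ℝ)) x = φ x) ∧
    (∫ x, (Set.indicator P (fun _ => (1:ℝ)) x + φ x * Set.indicator E (fun _ => (1:ℝ)) x) ∂μ)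
      = (μ P).toReal + ∫ x, φ x * Set.indicator E (fun _ => (1:ℝ)) x ∂μ := by
  have hvalP : ∀ x ∈ P, Set.indicator P (fun _ => (1:ℝ)) x
      + φ x * Set.indicator E (fun _ => (1:ℝ)) x = 1 := by
    intro x hx
    rw [Set.indicator_of_mem hx, Set.indicator_of_notMem (hPE x hx), mul_zero, add_zero]
  have hvalE : ∀ x ∈ E, Set.indicator P (fun _ => (1:ℝ)) x
      + φ x * Set.indicator E (fun _ => (1:ℝ)) x = φ x := by
    intro x hx
    have hxP : x ∉ P := fun hc => hPE x hc hx
    rw [Set.indicator_of_mem hx, Set.indicator_of_notMem hxP, mul_one, zero_add]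
  have hvalN : ∀ x, x ∉ P → x ∉ E → Set.indicator P (fun _ => (1:ℝ)) x
      + φ x * Set.indicator E (fun _ => (1:ℝ)) x = 0 := by
    intro x hx1 hx2
    rw [Set.indicator_of_notMem hx1, Set.indicator_of_notMem hx2, mul_zero, add_zero]
  have hbd : ∀ x, 0 ≤ Set.indicator P (fun _ => (1:ℝ)) x
      + φ x * Set.indicator E (fun _ => (1:ℝ)) x
      ∧ Set.indicator P (fun _ => (1:ℝ)) x + φ x * Set.indicator E (fun _ => (1:ℝ)) x ≤ 1 := by
    intro x
    by_cases hx1 : x ∈ P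
    · rw [hvalP x hx1]; exact ⟨zero_le_one, le_refl 1⟩
    · by_cases hx2 : x ∈ E
      · rw [hvalE x hx2]; exact hφ01 x
      · rw [hvalN x hx1 hx2]; exact ⟨le_refl 0, zero_le_one⟩
  have hmeas : Measurable (fun x => Set.indicator P (fun _ => (1:ℝ)) x
      + φ x * Set.indicator E (fun _ => (1:ℝ)) x) :=
    (measurable_const.indicator hPm).add (hφm.mul (measurable_const.indicator hEm))
  have hmem : MemLp (fun x => Set.indicator P (fun _ => (1:ℝ)) x
      + φ x * Set.indicator E (fun _ => (1:ℝ)) x) 2 μ := by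
    refine MemLp.of_bound hmeas.aestronglyMeasurable 1 (Filter.Eventually.of_forall fun x => ?_)
    rw [Real.norm_eq_abs, abs_le]
    exact ⟨by linarith [(hbd x).1], (hbd x).2⟩
  have hiPint : Integrable (Set.indicator P (fun _ => (1:ℝ))) μ :=
    (integrable_const (1:ℝ)).indicator hPm
  have hiEint : Integrable (Set.indicator E (fun _ => (1:ℝ))) μ :=
    (integrable_const (1:ℝ)).indicator hEm
  have hφEint : Integrable (fun x => φ x * Set.indicator E (fun _ => (1:ℝ)) x) μ := by
    refine bt_mul_int hφm.aestronglyMeasurable (Filter.Eventually.of_forall hφ01) hiEint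
  refine ⟨hmem, hbd, hvalP, hvalN, hvalE, ?_⟩
  rw [integral_add hiPint hφEint, integral_indicator_const (1:ℝ) hPm, smul_eq_mul, mul_one, measureReal_def]

end BathtubAux

/-- Uniqueness criterion for the relaxed bathtub problem:
(i) if `h(v) > 0` and `|{v > h(v)}| + |{v = h(v)}| = L|Ω|`, the maximiser of
`u ↦ ∫ u v` over `Ū_L` is unique up to a.e. equality;
(ii) if `h(v) > 0` and `|{v > h(v)}| < L|Ω| < |{v > h(v)}| + |{v = h(v)}|`, there
are at least two maximisers that are not a.e. equal;
(iii) if `h(v) = 0`, `|{v = 0}| > 0` and `|{v > 0}| < L|Ω|`, there are at least two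
maximisers that are not a.e. equal. -/
theorem relaxed_bathtub_uniqueness_criterion
    (d : ℕ) (hd : 1 ≤ d)
    (Ω : Set (Fin d → ℝ)) (hΩne : Ω.Nonempty) (hΩop : IsOpen Ω)
    (hΩbd : Bornology.IsBounded Ω)
    (L : ℝ) (hL : L ∈ Set.Ioo (0 : ℝ) 1)
    (μ : Measure (Fin d → ℝ)) (hμ : μ = volume.restrict Ω)
    (v : (Fin d → ℝ) → ℝ) (hv : MemLp v 2 μ)
    (Φ : ℝ → ℝ) (hΦ : ∀ r : ℝ, Φ r = (μ {x | v x > r}).toReal)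
    (Φinv : ℝ → ℝ) (hΦinv : ∀ s : ℝ, Φinv s = sInf {r : ℝ | Φ r ≤ s})
    (A : ℝ) (hA : A = L * (volume Ω).toReal)
    (hvv : ℝ) (hhv : hvv = max 0 (Φinv A))
    (IsMax : ((Fin d → ℝ) → ℝ) → Prop)
    (hIsMax : ∀ u : (Fin d → ℝ) → ℝ,
      IsMax u ↔ (MemLp u 2 μ ∧ (∀ᵐ x ∂μ, 0 ≤ u x ∧ u x ≤ 1) ∧
        (∫ x, u x ∂μ) ≤ A ∧
        (∀ w : (Fin d → ℝ) → ℝ, MemLp w 2 μ →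
          (∀ᵐ x ∂μ, 0 ≤ w x ∧ w x ≤ 1) → (∫ x, w x ∂μ) ≤ A →
          (∫ x, w x * v x ∂μ) ≤ ∫ x, u x * v x ∂μ))) :
    (0 < hvv →
      (μ {y | v y > hvv}).toReal + (μ {y | v y = hvv}).toReal = A →
      ∀ u₁ u₂ : (Fin d → ℝ) → ℝ, IsMax u₁ → IsMax u₂ → u₁ =ᵐ[μ] u₂) ∧
    (0 < hvv →
      (μ {y | v y > hvv}).toReal < A →
      A < (μ {y | v y > hvv}).toReal + (μ {y | v y = hvv}).toReal →
      ∃ u₁ u₂ : (Fin d → ℝ) → ℝ, IsMax u₁ ∧ IsMax u₂ ∧ ¬ u₁ =ᵐ[μ] u₂) ∧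
    (hvv = 0 →
      0 < μ {y | v y = 0} →
      (μ {y | v y > 0}).toReal < A →
      ∃ u₁ u₂ : (Fin d → ℝ) → ℝ, IsMax u₁ ∧ IsMax u₂ ∧ ¬ u₁ =ᵐ[μ] u₂) := by
  haveI hfin : IsFiniteMeasure μ := by
    constructor
    rw [hμ, Measure.restrict_apply_univ]
    exact hΩbd.measure_lt_top
  have hv1 : Integrable v μ := hv.integrable one_le_two
  obtain ⟨g, hgsm, hvg⟩ := hv.1
  have hgm : Measurable g := hgsm.measurable
  have htrans1 : ∀ r : ℝ, μ {y | v y > r} = μ {y | r < g y} := by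
    intro r
    refine measure_congr (Filter.eventuallyEq_set.2 (hvg.mono fun x hx => ?_))
    simp only [Set.mem_setOf_eq, gt_iff_lt, hx]
  have htrans2 : ∀ r : ℝ, μ {y | v y = r} = μ {y | g y = r} := by
    intro r
    refine measure_congr (Filter.eventuallyEq_set.2 (hvg.mono fun x hx => ?_))
    simp only [Set.mem_setOf_eq, hx]
  have hmemΩ : ∀ᵐ x ∂μ, x ∈ Ω := by rw [hμ]; exact ae_restrict_mem hΩop.measurableSet
  refine ⟨?_, ?_, ?_⟩
  -- Part (i)
  · intro hpos hsum u₁ u₂ hm1 hm2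
    rw [htrans1 hvv, htrans2 hvv] at hsum
    rw [hIsMax] at hm1 hm2
    obtain ⟨hu12, h1b, h1A, h1opt⟩ := hm1
    obtain ⟨hu22, h2b, h2A, h2opt⟩ := hm2
    have e1 := bt_unique v g u₁ hvv A hpos hvg hgm hv1 hsum hu12.1 h1b h1A h1opt
    have e2 := bt_unique v g u₂ hvv A hpos hvg hgm hv1 hsum hu22.1 h2b h2A h2opt
    exact e1.trans e2.symm
  -- Part (ii)
  · intro hpos hlt hgt
    rw [htrans1 hvv] at hlt
    rw [htrans1 hvv, htrans2 hvv] at hgt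
    set P := {x : Fin d → ℝ | hvv < g x} with hPdef
    set E := {x : Fin d → ℝ | g x = hvv} with hEdef
    have hPm : MeasurableSet P := measurableSet_lt measurable_const hgm
    have hEm : MeasurableSet E := hgm (measurableSet_singleton hvv)
    have hPE : ∀ x, x ∈ P → x ∉ E := fun x hx1 hx2 =>
      absurd (Set.mem_setOf_eq ▸ hx2) (ne_of_gt (Set.mem_setOf_eq ▸ hx1))
    set mP := (μ P).toReal with hmPdef
    set mE := (μ E).toReal with hmEdef
    have hmE : 0 < mE := by linarith
    have hE0' : μ E ≠ 0 := by
      intro hc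
      have : mE = 0 := by rw [hmEdef, hc, ENNReal.toReal_zero]
      linarith
    set c := (A - mP) / mE with hcdef
    have hc0 : 0 < c := div_pos (by linarith) hmE
    have hc1 : c < 1 := (div_lt_one hmE).2 (by linarith)
    have hcmE : c * mE = A - mP := div_mul_cancel₀ _ hmE.ne'
    obtain ⟨R, hR⟩ := hΩbd.subset_closedBall 0
    set i0 : Fin d := ⟨0, hd⟩ with hi0
    have hcoord : ∀ x ∈ Ω, |x i0| ≤ |R| := by
      intro x hx
      have h1 : ‖x i0‖ ≤ ‖x‖ := norm_le_pi_norm x i0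
      have h2 : ‖x‖ ≤ R := by
        have := hR hx
        rwa [Metric.mem_closedBall, dist_zero_right] at this
      rw [Real.norm_eq_abs] at h1
      exact h1.trans (h2.trans (le_abs_self R))
    set ψ : ℝ → (Fin d → ℝ) → ℝ := fun s x => min 1 (max 0 (s - x i0)) with hψdef
    have hψm : ∀ s, Measurable (ψ s) := fun s =>
      measurable_const.min (measurable_const.max (measurable_const.sub (measurable_pi_apply i0)))
    have hψ01 : ∀ s x, 0 ≤ ψ s x ∧ ψ s x ≤ 1 := fun s x =>
      ⟨le_min zero_le_one (le_max_left _ _), min_le_left _ _⟩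
    have hiEint : Integrable (Set.indicator E (fun _ => (1:ℝ))) μ :=
      (integrable_const (1:ℝ)).indicator hEm
    have hindE01 : ∀ x, 0 ≤ Set.indicator E (fun _ => (1:ℝ)) x
        ∧ Set.indicator E (fun _ => (1:ℝ)) x ≤ 1 := by
      intro x
      by_cases hx : x ∈ E
      · rw [Set.indicator_of_mem hx]; exact ⟨zero_le_one, le_refl 1⟩
      · rw [Set.indicator_of_notMem hx]; exact ⟨le_refl 0, zero_le_one⟩
    set G : ℝ → ℝ := fun s => ∫ x, ψ s x * Set.indicator E (fun _ => (1:ℝ)) x ∂μ with hGdef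
    have hGint : ∀ s, Integrable (fun x => ψ s x * Set.indicator E (fun _ => (1:ℝ)) x) μ :=
      fun s => bt_mul_int (hψm s).aestronglyMeasurable
        (Filter.Eventually.of_forall (hψ01 s)) hiEint
    have hGcont : Continuous G := by
      have hlip : LipschitzWith (Real.toNNReal mE) G := by
        apply LipschitzWith.of_dist_le_mul
        intro s t
        rw [Real.dist_eq, Real.dist_eq]
        have heqf : (fun x => (ψ s x - ψ t x) * Set.indicator E (fun _ => (1:ℝ)) x)
            = fun x => ψ s x * Set.indicator E (fun _ => (1:ℝ)) x
              - ψ t x * Set.indicator E (fun _ => (1:ℝ)) x := by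
          funext x; ring
        have hInt : Integrable (fun x => (ψ s x - ψ t x) * Set.indicator E (fun _ => (1:ℝ)) x) μ := by
          rw [heqf]; exact (hGint s).sub (hGint t)
        have hdiff : G s - G t = ∫ x, (ψ s x - ψ t x) * Set.indicator E (fun _ => (1:ℝ)) x ∂μ := by
          rw [hGdef]
          simp only []
          rw [heqf, integral_sub (hGint s) (hGint t)]
        have hptw : ∀ x, ‖(ψ s x - ψ t x) * Set.indicator E (fun _ => (1:ℝ)) x‖
            ≤ |s - t| * Set.indicator E (fun _ => (1:ℝ)) x := by
          intro x
          rw [Real.norm_eq_abs, abs_mul, abs_of_nonneg (hindE01 x).1]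
          apply mul_le_mul_of_nonneg_right _ (hindE01 x).1
          calc |ψ s x - ψ t x|
              ≤ max |(1:ℝ) - 1| |max 0 (s - x i0) - max 0 (t - x i0)| :=
                abs_min_sub_min_le_max 1 (max 0 (s - x i0)) 1 (max 0 (t - x i0))
            _ = |max 0 (s - x i0) - max 0 (t - x i0)| := by simp
            _ = |max (s - x i0) 0 - max (t - x i0) 0| := by
                rw [max_comm (0:ℝ) (s - x i0), max_comm (0:ℝ) (t - x i0)]
            _ ≤ |(s - x i0) - (t - x i0)| := abs_max_sub_max_le_abs _ _ _
            _ = |s - t| := by ring_nf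
        calc |G s - G t| = ‖∫ x, (ψ s x - ψ t x) * Set.indicator E (fun _ => (1:ℝ)) x ∂μ‖ := by
              rw [hdiff, Real.norm_eq_abs]
          _ ≤ ∫ x, ‖(ψ s x - ψ t x) * Set.indicator E (fun _ => (1:ℝ)) x‖ ∂μ :=
              norm_integral_le_integral_norm _
          _ ≤ ∫ x, |s - t| * Set.indicator E (fun _ => (1:ℝ)) x ∂μ :=
              integral_mono hInt.norm (hiEint.const_mul _) hptw
          _ = |s - t| * mE := by
              rw [integral_const_mul, integral_indicator_const (1:ℝ) hEm, smul_eq_mul, mul_one, measureReal_def]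
          _ = (Real.toNNReal mE : ℝ) * |s - t| := by
              rw [Real.coe_toNNReal mE hmE.le]; ring
      exact hlip.continuous
    have hG0 : G (-(|R| + 1)) = 0 := by
      rw [hGdef]
      apply integral_eq_zero_of_ae
      filter_upwards [hmemΩ] with x hx
      have h1 : |x i0| ≤ |R| := hcoord x hx
      have h2 : ψ (-(|R| + 1)) x = 0 := by
        have ht : (-(|R| + 1)) - x i0 ≤ 0 := by
          have := (abs_le.1 h1).1
          linarith
        rw [hψdef]
        simp only []
        rw [max_eq_left ht, min_eq_right zero_le_one]
      simp only [Pi.zero_apply]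
      rw [h2, zero_mul]
    have hG1 : G (|R| + 1) = mE := by
      have hcongr : (fun x => ψ (|R|+1) x * Set.indicator E (fun _ => (1:ℝ)) x)
          =ᵐ[μ] Set.indicator E (fun _ => (1:ℝ)) := by
        filter_upwards [hmemΩ] with x hx
        have h1 : |x i0| ≤ |R| := hcoord x hx
        have h2 : ψ (|R|+1) x = 1 := by
          have ht : (1:ℝ) ≤ (|R|+1) - x i0 := by
            have := (abs_le.1 h1).2
            linarith
          rw [hψdef]
          simp only []
          rw [max_eq_right (by linarith : (0:ℝ) ≤ (|R|+1) - x i0), min_eq_left ht]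
        rw [h2, one_mul]
      rw [hGdef]
      simp only []
      rw [integral_congr_ae hcongr, integral_indicator_const (1:ℝ) hEm, smul_eq_mul, mul_one, measureReal_def]
    have hval : c * mE ∈ Set.Icc (G (-(|R|+1))) (G (|R|+1)) := by
      rw [hG0, hG1]
      constructor
      · positivity
      · nlinarith
    have hab : -(|R|+1) ≤ |R|+1 := by linarith [abs_nonneg R]
    obtain ⟨s₀, hs₀mem, hs₀⟩ := intermediate_value_Icc hab hGcont.continuousOn hval
    obtain ⟨hmem1, hbd1, hvalP1, hvalN1, hvalE1, hint1⟩ :=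
      bt_cand (μ := μ) hPm hEm hPE (fun _ => c) measurable_const
        (fun x => ⟨hc0.le, hc1.le⟩)
    obtain ⟨hmem2, hbd2, hvalP2, hvalN2, hvalE2, hint2⟩ :=
      bt_cand (μ := μ) hPm hEm hPE (ψ s₀) (hψm s₀) (hψ01 s₀)
    set u₁ := fun x => Set.indicator P (fun _ => (1:ℝ)) x
      + c * Set.indicator E (fun _ => (1:ℝ)) x with hu₁def
    set u₂ := fun x => Set.indicator P (fun _ => (1:ℝ)) x
      + ψ s₀ x * Set.indicator E (fun _ => (1:ℝ)) x with hu₂def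
    have hI1 : (∫ x, u₁ x ∂μ) = A := by
      rw [hu₁def, hint1, integral_const_mul, integral_indicator_const (1:ℝ) hEm,
        smul_eq_mul, mul_one, measureReal_def]
      rw [← hmPdef, ← hmEdef]
      linarith [hcmE]
    have hI2 : (∫ x, u₂ x ∂μ) = A := by
      rw [hu₂def, hint2]
      have : (∫ x, ψ s₀ x * Set.indicator E (fun _ => (1:ℝ)) x ∂μ) = c * mE := hs₀
      rw [this, ← hmPdef]
      linarith [hcmE]
    have hsign : ∀ (u : (Fin d → ℝ) → ℝ), (∀ x ∈ P, u x = 1) → (∀ x, x ∉ P → x ∉ E → u x = 0) →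
        ∀ᵐ x ∂μ, (hvv < v x → u x = 1) ∧ (v x < hvv → u x = 0) := by
      intro u hP hN
      filter_upwards [hvg] with x hx
      constructor
      · intro hlt2; exact hP x (by rw [hPdef, Set.mem_setOf_eq, ← hx]; exact hlt2)
      · intro hlt2
        refine hN x ?_ ?_
        · rw [hPdef, Set.mem_setOf_eq, ← hx]; exact not_lt.2 hlt2.le
        · rw [hEdef, Set.mem_setOf_eq, ← hx]; exact ne_of_lt hlt2
    have hmax : ∀ (u : (Fin d → ℝ) → ℝ), MemLp u 2 μ → (∀ x, 0 ≤ u x ∧ u x ≤ 1) →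
        (∫ x, u x ∂μ) = A → (∀ x ∈ P, u x = 1) → (∀ x, x ∉ P → x ∉ E → u x = 0) → IsMax u := by
      intro u hu2 hub huA huP huN
      rw [hIsMax]
      refine ⟨hu2, Filter.Eventually.of_forall hub, le_of_eq huA, ?_⟩
      exact bt_opt v u hvv A hpos.le hv1 hu2.1 (Filter.Eventually.of_forall hub)
        (hsign u huP huN) (Or.inr huA)
    refine ⟨u₁, u₂, hmax u₁ hmem1 hbd1 hI1 hvalP1 hvalN1,
      hmax u₂ hmem2 hbd2 hI2 hvalP2 hvalN2, ?_⟩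
    intro hcon
    set H := {x : Fin d → ℝ | x i0 = s₀ - c} with hHdef
    have hHm : MeasurableSet H :=
      measurableSet_eq_fun (measurable_pi_apply i0) measurable_const
    have hHnull : μ H = 0 := by
      rw [hμ, Measure.restrict_apply hHm]
      refine le_antisymm ((measure_mono Set.inter_subset_left).trans_eq ?_) zero_le
      exact hyperplane_null d i0 (s₀ - c)
    have hsub : E ⊆ {x | ¬ u₁ x = u₂ x} ∪ H := by
      intro x hx
      by_cases hne : u₁ x = u₂ x
      · right
        have h1 : u₁ x = c := hvalE1 x hx
        have h2 : u₂ x = ψ s₀ x := hvalE2 x hx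
        have hψc : min 1 (max 0 (s₀ - x i0)) = c := by
          have : ψ s₀ x = c := by rw [← h2, ← hne, h1]
          exact this
        have hmaxc : max 0 (s₀ - x i0) = c := by
          rcases le_or_gt 1 (max 0 (s₀ - x i0)) with hle | hlt2
          · exfalso
            rw [min_eq_left hle] at hψc
            exact absurd hψc.symm (ne_of_lt hc1)
          · rw [min_eq_right hlt2.le] at hψc
            exact hψc
        have hxi0 : s₀ - x i0 = c := by
          rcases le_or_gt (s₀ - x i0) 0 with hle | hlt2
          · exfalso
            rw [max_eq_left hle] at hmaxc
            exact absurd hmaxc.symm hc0.ne'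
          · rw [max_eq_right hlt2.le] at hmaxc
            exact hmaxc
        rw [hHdef]
        simp only [Set.mem_setOf_eq]
        linarith
      · left; exact hne
    have hcon' : μ {x | ¬ u₁ x = u₂ x} = 0 := hcon
    have hE0'' : μ E = 0 := by
      refine le_antisymm ?_ zero_le
      calc μ E ≤ μ ({x | ¬ u₁ x = u₂ x} ∪ H) := measure_mono hsub
        _ ≤ μ {x | ¬ u₁ x = u₂ x} + μ H := measure_union_le _ _
        _ = 0 := by rw [hcon', hHnull, add_zero]
    exact hE0' hE0''
  -- Part (iii)
  · intro h0 hE0 hPA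
    rw [htrans1 0] at hPA
    have hE0' : 0 < μ {y | g y = 0} := by rw [← htrans2 0]; exact hE0
    set P := {x : Fin d → ℝ | (0:ℝ) < g x} with hPdef
    set E := {x : Fin d → ℝ | g x = (0:ℝ)} with hEdef
    have hPm : MeasurableSet P := measurableSet_lt measurable_const hgm
    have hEm : MeasurableSet E := hgm (measurableSet_singleton 0)
    have hPE : ∀ x, x ∈ P → x ∉ E := fun x hx1 hx2 =>
      absurd (Set.mem_setOf_eq ▸ hx2) (ne_of_gt (Set.mem_setOf_eq ▸ hx1))
    have hmE : 0 < (μ E).toReal := ENNReal.toReal_pos hE0'.ne' (measure_ne_top μ _)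
    set mP := (μ P).toReal with hmPdef
    set mE := (μ E).toReal with hmEdef
    set c := min 1 ((A - mP) / mE) with hcdef
    have hc0 : 0 < c := lt_min one_pos (div_pos (by linarith) hmE)
    have hc1 : c ≤ 1 := min_le_left _ _
    obtain ⟨hmem1, hbd1, hvalP1, hvalN1, hvalE1, hint1⟩ :=
      bt_cand (μ := μ) hPm hEm hPE (fun _ => (0:ℝ)) measurable_const
        (fun x => ⟨le_refl 0, zero_le_one⟩)
    obtain ⟨hmem2, hbd2, hvalP2, hvalN2, hvalE2, hint2⟩ :=
      bt_cand (μ := μ) hPm hEm hPE (fun _ => c) measurable_const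
        (fun x => ⟨hc0.le, hc1⟩)
    set u₁ := fun x => Set.indicator P (fun _ => (1:ℝ)) x
      + (0:ℝ) * Set.indicator E (fun _ => (1:ℝ)) x with hu₁def
    set u₂ := fun x => Set.indicator P (fun _ => (1:ℝ)) x
      + c * Set.indicator E (fun _ => (1:ℝ)) x with hu₂def
    have hiEint : Integrable (Set.indicator E (fun _ => (1:ℝ))) μ :=
      (integrable_const (1:ℝ)).indicator hEm
    have hI1 : (∫ x, u₁ x ∂μ) = mP := by
      rw [hu₁def, hint1]
      simp
      rfl
    have hI2 : (∫ x, u₂ x ∂μ) = mP + c * mE := by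
      rw [hu₂def, hint2]
      congr 1
      rw [integral_const_mul, integral_indicator_const (1:ℝ) hEm, smul_eq_mul, mul_one, measureReal_def]
    have hcmE : c * mE ≤ A - mP := by
      have h1 : c ≤ (A - mP) / mE := min_le_right _ _
      have := mul_le_mul_of_nonneg_right h1 hmE.le
      rwa [div_mul_cancel₀ _ hmE.ne'] at this
    have hI1A : (∫ x, u₁ x ∂μ) ≤ A := by rw [hI1]; linarith
    have hI2A : (∫ x, u₂ x ∂μ) ≤ A := by rw [hI2]; linarith
    have hsign : ∀ (u : (Fin d → ℝ) → ℝ), (∀ x ∈ P, u x = 1) → (∀ x, x ∉ P → x ∉ E → u x = 0) →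
        ∀ᵐ x ∂μ, ((0:ℝ) < v x → u x = 1) ∧ (v x < 0 → u x = 0) := by
      intro u hP hN
      filter_upwards [hvg] with x hx
      constructor
      · intro hlt; exact hP x (by rw [hPdef, Set.mem_setOf_eq, ← hx]; exact hlt)
      · intro hlt
        refine hN x ?_ ?_
        · rw [hPdef, Set.mem_setOf_eq, ← hx]; exact not_lt.2 hlt.le
        · rw [hEdef, Set.mem_setOf_eq, ← hx]; exact ne_of_lt hlt
    have hmax : ∀ (u : (Fin d → ℝ) → ℝ), MemLp u 2 μ → (∀ x, 0 ≤ u x ∧ u x ≤ 1) →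
        (∫ x, u x ∂μ) ≤ A → (∀ x ∈ P, u x = 1) → (∀ x, x ∉ P → x ∉ E → u x = 0) → IsMax u := by
      intro u hu2 hub huA huP huN
      rw [hIsMax]
      refine ⟨hu2, Filter.Eventually.of_forall hub, huA, ?_⟩
      exact bt_opt v u 0 A (le_refl 0) hv1 hu2.1 (Filter.Eventually.of_forall hub)
        (hsign u huP huN) (Or.inl rfl)
    refine ⟨u₁, u₂, hmax u₁ hmem1 hbd1 hI1A hvalP1 hvalN1,
      hmax u₂ hmem2 hbd2 hI2A hvalP2 hvalN2, ?_⟩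
    intro hcon
    have hsub : E ⊆ {x | ¬ u₁ x = u₂ x} := by
      intro x hx
      simp only [Set.mem_setOf_eq]
      have h1 : u₁ x = 0 := hvalE1 x hx
      have h2 : u₂ x = c := hvalE2 x hx
      rw [h1, h2]
      exact fun hc => absurd hc.symm hc0.ne'
    have hcon' : μ {x | ¬ u₁ x = u₂ x} = 0 := hcon
    exact absurd (le_antisymm ((measure_mono hsub).trans_eq hcon') zero_le) hE0'.ne'
end
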